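/- arXiv:2006.05773 — 2 statements merged into one kernel-verified Lean document; each statement's English description precedes it below -/
import Mathlib

section
/- Let F ∈ C⁰(T⁵) and let φ ∈ C²(T⁵) solve equation (★). Let x₀ ∈ K = [−1/2,1/2]⁵ be a point where φ attains its minimum over K, set ε₀ = 1/48 and u(x) = φ(x) − max_K φ + 4ε₀|x−x₀|². Let Γ_{ε₀} = { x ∈ B_{1/2}(x₀) : u(y) ≥ u(x) + ∇u(x)·(y−x) for all y ∈ B_{1/2}(x₀), and |∇u(x)| < ε₀/2 }. Then the Lebesgue measure of Γ_{ε₀} satisfies meas(Γ_{ε₀}) ≥ |B_{1/2}(0)| · (e^{−max_K F}/96)⁵, where |B_{1/2}(0)| is the Lebesgue measure of the ball of radius 1/2 in ℝ⁵. -/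
open MeasureTheory

/-- Partial derivative in the `i`-th coordinate direction. -/
noncomputable def pd {n : ℕ} (i : Fin n) (f : (Fin n → ℝ) → ℝ) : (Fin n → ℝ) → ℝ :=
  fun x => fderiv ℝ f x (Pi.single i 1)

/-- Second partial derivative `∂²f/∂x^i∂x^j`. -/
noncomputable def pd2 {n : ℕ} (i j : Fin n) (f : (Fin n → ℝ) → ℝ) : (Fin n → ℝ) → ℝ :=
  pd i (pd j f)

/-- A function on `ℝⁿ` that is `1`-periodic in every coordinate, i.e. a function on `Tⁿ`. -/
def PeriodicPi {n : ℕ} (f : (Fin n → ℝ) → ℝ) : Prop :=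
  ∀ x : Fin n → ℝ, ∀ i : Fin n, f (x + Pi.single i 1) = f x

/-- The Euclidean Laplacian. -/
noncomputable def lap {n : ℕ} (f : (Fin n → ℝ) → ℝ) : (Fin n → ℝ) → ℝ :=
  fun x => ∑ i, pd2 i i f x

/-- Equation (★): the reduction of the quaternionic Monge–Ampère equation to `T⁵`. -/
def EqStar (F φ : (Fin 5 → ℝ) → ℝ) : Prop :=
  ∀ x : Fin 5 → ℝ,
    (pd2 0 0 φ x + pd2 1 1 φ x + pd2 2 2 φ x + pd2 3 3 φ x + 1) * (pd2 4 4 φ x + 1)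
      - (pd2 0 4 φ x) ^ 2 - (pd2 1 4 φ x) ^ 2 - (pd2 2 4 φ x) ^ 2 - (pd2 3 4 φ x) ^ 2
      = Real.exp (F x)

/-- The Euclidean norm of a vector in `ℝⁿ`. -/
noncomputable def eucNorm {n : ℕ} (v : Fin n → ℝ) : ℝ :=
  Real.sqrt (∑ i, (v i) ^ 2)

/-- The fundamental cube `K = [−1/2, 1/2]⁵`. -/
def Kcube : Set (Fin 5 → ℝ) :=
  Set.Icc (fun _ => -(1/2)) (fun _ => 1/2)

/-- The function `u(x) = φ(x) − max_K φ + 4ε₀|x − x₀|²` with `ε₀ = 1/48`. -/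
noncomputable def uAux (φ : (Fin 5 → ℝ) → ℝ) (x₀ : Fin 5 → ℝ) : (Fin 5 → ℝ) → ℝ :=
  fun x => φ x - sSup (φ '' Kcube) + 4 * (1/48) * ∑ i, (x i - x₀ i) ^ 2

/-- The set `Γ_{ε₀}` of points of the ball `B_{1/2}(x₀)` where `u` admits a supporting
hyperplane (on that ball) and the gradient of `u` is smaller than `ε₀/2`, with `ε₀ = 1/48`. -/
noncomputable def GammaSet (φ : (Fin 5 → ℝ) → ℝ) (x₀ : Fin 5 → ℝ) : Set (Fin 5 → ℝ) :=
  {x | eucNorm (x - x₀) < 1/2 ∧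
    (∀ y : Fin 5 → ℝ, eucNorm (y - x₀) < 1/2 →
      uAux φ x₀ x + ∑ i, pd i (uAux φ x₀) x * (y i - x i) ≤ uAux φ x₀ y) ∧
    eucNorm (fun i => pd i (uAux φ x₀) x) < (1/48) / 2}


-- ===== auxiliary lemmas =====

lemma eucNorm_nonneg {n : ℕ} (v : Fin n → ℝ) : 0 ≤ eucNorm v := Real.sqrt_nonneg _

lemma eucNorm_sq {n : ℕ} (v : Fin n → ℝ) : eucNorm v ^ 2 = ∑ i, v i ^ 2 :=
  Real.sq_sqrt (by positivity)

lemma abs_le_eucNorm {n : ℕ} (v : Fin n → ℝ) (i : Fin n) : |v i| ≤ eucNorm v := by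
  rw [eucNorm, ← Real.sqrt_sq_eq_abs]
  exact Real.sqrt_le_sqrt (Finset.single_le_sum (f := fun j => v j ^ 2)
    (fun j _ => sq_nonneg _) (Finset.mem_univ i))

lemma eucNorm_CS {n : ℕ} (p w : Fin n → ℝ) : ∑ i, p i * w i ≤ eucNorm p * eucNorm w :=
  Real.sum_mul_le_sqrt_mul_sqrt _ _ _

lemma continuous_eucNorm {n : ℕ} : Continuous (eucNorm (n := n)) :=
  Real.continuous_sqrt.comp (by fun_prop)

lemma eucNorm_smul {n : ℕ} {c : ℝ} (hc : 0 ≤ c) (v : Fin n → ℝ) :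
    eucNorm (c • v) = c * eucNorm v := by
  have : ∑ i, ((c • v) i) ^ 2 = c ^ 2 * ∑ i, v i ^ 2 := by
    rw [Finset.mul_sum]
    refine Finset.sum_congr rfl fun i _ => ?_
    simp [mul_pow]
  rw [eucNorm, eucNorm, this, Real.sqrt_mul (sq_nonneg c), Real.sqrt_sq hc]

/-- Second derivative test, one dimension. -/
lemma sd_test {w w1 : ℝ → ℝ} {L : ℝ} (hw : ∀ t, HasDerivAt w (w1 t) t)
    (hw1 : HasDerivAt w1 L 0) (hmin : IsLocalMin w 0) : 0 ≤ L := by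
  by_contra hL
  push_neg at hL
  have h0 : w1 0 = 0 := hmin.hasDerivAt_eq_zero (hw 0)
  have hslope : Filter.Tendsto (slope w1 0) (nhdsWithin 0 {(0:ℝ)}ᶜ) (nhds L) :=
    hasDerivAt_iff_tendsto_slope.1 hw1
  have hev : {t : ℝ | slope w1 0 t < 0} ∈ nhdsWithin 0 {(0:ℝ)}ᶜ :=
    hslope.eventually (Filter.tendsto_id.eventually_lt_const hL)
  obtain ⟨δ, hδpos, hsub⟩ := Metric.mem_nhdsWithin_iff.1 hev
  obtain ⟨δ', hδ'pos, hmin'⟩ := Metric.eventually_nhds_iff.1 hmin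
  set t := min δ δ' / 2 with ht
  have htpos : 0 < t := by positivity
  have htδ : t < δ := by
    have h1 := min_le_left δ δ'
    have h2 := min_le_right δ δ'
    rw [ht]; cases' le_or_gt δ δ' with h h <;> [skip; skip] <;> linarith [hδpos, hδ'pos]
  have htδ' : t < δ' := by
    have h1 := min_le_left δ δ'
    have h2 := min_le_right δ δ'
    rw [ht]; linarith [hδpos, hδ'pos]
  obtain ⟨c, hc, hceq⟩ := exists_hasDerivAt_eq_slope w w1 htpos
    (fun x _ => (hw x).continuousAt.continuousWithinAt) (fun x _ => hw x)
  have hc1 : c ∈ Metric.ball (0:ℝ) δ ∩ {(0:ℝ)}ᶜ := by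
    constructor
    · rw [Metric.mem_ball, Real.dist_eq, sub_zero, abs_of_pos hc.1]
      exact lt_trans hc.2 htδ
    · exact fun h => absurd (h : c = 0) (ne_of_gt hc.1)
  have hcneg : slope w1 0 c < 0 := hsub hc1
  rw [slope_def_field, h0, sub_zero, sub_zero] at hcneg
  have hwc : 0 ≤ w1 c := by
    have hwt : w 0 ≤ w t := by
      apply hmin'
      rw [Real.dist_eq, sub_zero, abs_of_pos htpos]
      exact htδ'
    rw [hceq]
    exact div_nonneg (by linarith) (by linarith)
  have : w1 c < 0 := by
    have := div_neg_iff.1 hcneg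
    rcases this with ⟨h1, h2⟩ | ⟨h1, h2⟩
    · linarith [hc.1]
    · exact h1
  linarith



lemma amgm5 (lam : Fin 5 → ℝ) (h : ∀ i, 0 ≤ lam i) :
    ∏ i, lam i ≤ ((∑ i, lam i) / 5) ^ 5 := by
  have hw : ∀ i ∈ Finset.univ, (0:ℝ) ≤ (fun _ : Fin 5 => (1/5 : ℝ)) i := fun _ _ => by norm_num
  have hws : ∑ _i : Fin 5, (1/5 : ℝ) = 1 := by norm_num
  have hz : ∀ i ∈ Finset.univ, 0 ≤ lam i := fun i _ => h i
  have key := Real.geom_mean_le_arith_mean_weighted Finset.univ _ lam hw hws hz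
  have lhs_eq : ∏ i, lam i ^ ((1:ℝ)/5) = (∏ i, lam i) ^ ((1:ℝ)/5) := by
    rw [← Real.finset_prod_rpow _ _ (fun i _ => h i)]
  have hsum : ∑ i, (1/5 : ℝ) * lam i = (∑ i, lam i) / 5 := by
    rw [← Finset.mul_sum]; ring
  rw [lhs_eq, hsum] at key
  have hprod : 0 ≤ ∏ i, lam i := Finset.prod_nonneg (fun i _ => h i)
  calc ∏ i, lam i = ((∏ i, lam i) ^ ((1:ℝ)/5)) ^ (5:ℕ) := by
        rw [← Real.rpow_natCast ((∏ i, lam i) ^ ((1:ℝ)/5)) 5, ← Real.rpow_mul hprod]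
        norm_num
    _ ≤ ((∑ i, lam i) / 5) ^ (5:ℕ) :=
        pow_le_pow_left₀ (Real.rpow_nonneg hprod _) key 5

lemma trace_eq_sum_eigenvalues {n : Type*} [Fintype n] [DecidableEq n]
    {A : Matrix n n ℝ} (hA : A.IsHermitian) : A.trace = ∑ i, hA.eigenvalues i := by
  have h := hA.spectral_theorem
  have hU : (hA.eigenvectorUnitary : Matrix n n ℝ) * (star hA.eigenvectorUnitary : Matrix n n ℝ) = 1 := by
    simpa using hA.eigenvectorUnitary.2.2
  calc A.trace = ((hA.eigenvectorUnitary : Matrix n n ℝ) *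
        Matrix.diagonal (RCLike.ofReal ∘ hA.eigenvalues) * (star hA.eigenvectorUnitary : Matrix n n ℝ)).trace := by conv_lhs => rw [h, Unitary.conjStarAlgAut_apply]
    _ = ((star hA.eigenvectorUnitary : Matrix n n ℝ) * (hA.eigenvectorUnitary : Matrix n n ℝ) *
        Matrix.diagonal (RCLike.ofReal ∘ hA.eigenvalues)).trace := by
        rw [Matrix.trace_mul_cycle]
    _ = (Matrix.diagonal (RCLike.ofReal ∘ hA.eigenvalues)).trace := by
        have : (star hA.eigenvectorUnitary : Matrix n n ℝ) * (hA.eigenvectorUnitary : Matrix n n ℝ) = 1 := by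
          simpa using hA.eigenvectorUnitary.2.1
        rw [this, one_mul]
    _ = ∑ i, hA.eigenvalues i := by
        rw [Matrix.trace_diagonal]; simp

lemma det_le_trace_pow {A : Matrix (Fin 5) (Fin 5) ℝ} (hA : A.PosSemidef) :
    A.det ≤ (A.trace / 5) ^ 5 := by
  have hH := hA.isHermitian
  have hdet : A.det = ∏ i, hH.eigenvalues i := by
    rw [hH.det_eq_prod_eigenvalues]; simp
  have htr : A.trace = ∑ i, hH.eigenvalues i := trace_eq_sum_eigenvalues hH
  rw [hdet, htr]
  exact amgm5 _ (fun i => hA.eigenvalues_nonneg i)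

lemma det_nonneg_of_psd {A : Matrix (Fin 5) (Fin 5) ℝ} (hA : A.PosSemidef) : 0 ≤ A.det := by
  have hH := hA.isHermitian
  have hdet : A.det = ∏ i, hH.eigenvalues i := by
    rw [hH.det_eq_prod_eigenvalues]; simp
  rw [hdet]
  exact Finset.prod_nonneg (fun i _ => hA.eigenvalues_nonneg i)

lemma periodicPi_int {n : ℕ} {f : (Fin n → ℝ) → ℝ} (hf : PeriodicPi f)
    (i : Fin n) (k : ℤ) : ∀ x, f (x + Pi.single i (k : ℝ)) = f x := by
  induction k using Int.induction_on with
  | zero => intro x; simp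
  | succ k ih =>
      intro x
      have h : (((k : ℤ) + 1 : ℤ) : ℝ) = ((k : ℤ) : ℝ) + 1 := by push_cast; ring
      rw [h, Pi.single_add, ← add_assoc, hf _ i, ih]
  | pred k ih =>
      intro x
      have h : ((-(k : ℕ) - 1 : ℤ) : ℝ) = (-1 : ℝ) + ((-(k:ℕ) : ℤ) : ℝ) := by push_cast; ring
      have h2 := hf (x + Pi.single i (-1 : ℝ)) i
      have h3 : x + Pi.single i (-1:ℝ) + Pi.single i 1 = x := by
        rw [add_assoc, ← Pi.single_add]; norm_num
      rw [h3] at h2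
      rw [h, Pi.single_add, ← add_assoc, ih, h2]

lemma periodicPi_shift {n : ℕ} {f : (Fin n → ℝ) → ℝ} (hf : PeriodicPi f)
    (x : Fin n → ℝ) (m : Fin n → ℤ) : f (x + fun i => (m i : ℝ)) = f x := by
  have key : ∀ s : Finset (Fin n), f (x + ∑ i ∈ s, Pi.single i ((m i : ℝ))) = f x := by
    intro s
    induction s using Finset.induction_on with
    | empty => simp
    | @insert j s' hj ih =>
        rw [Finset.sum_insert hj]
        have e : x + ((Pi.single j ((m j : ℝ)) : Fin n → ℝ) + ∑ i ∈ s', (Pi.single i ((m i : ℝ)) : Fin n → ℝ)) =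
            (x + ∑ i ∈ s', (Pi.single i ((m i : ℝ)) : Fin n → ℝ)) + (Pi.single j ((m j : ℝ)) : Fin n → ℝ) := by
          abel
        rw [e, periodicPi_int hf j (m j)]
        exact ih
  have h : (fun i => (m i : ℝ)) = ∑ i, Pi.single i ((m i : ℝ)) := by
    rw [Finset.univ_sum_single]
  rw [h]
  exact key Finset.univ

lemma exists_rep (x : Fin 5 → ℝ) :
    ∃ y ∈ Kcube, ∀ f : (Fin 5 → ℝ) → ℝ, PeriodicPi f → f x = f y := by
  set y : Fin 5 → ℝ := fun i => x i - (round (x i) : ℝ) with hy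
  refine ⟨y, ?_, ?_⟩
  · constructor
    · intro i
      have h := abs_sub_round (x i)
      rw [abs_le] at h
      simpa [hy] using h.1
    · intro i
      have h := abs_sub_round (x i)
      rw [abs_le] at h
      simpa [hy] using h.2
  · intro f hf
    have h1 := periodicPi_shift hf y (fun i => round (x i))
    have h2 : y + (fun i => ((round (x i) : ℤ) : ℝ)) = x := by
      funext i; simp [hy]
    rw [h2] at h1
    exact h1

lemma psd_diag_nonneg {A : Matrix (Fin 5) (Fin 5) ℝ} (hA : A.PosSemidef) (i : Fin 5) :
    0 ≤ A i i := by
  have h := hA.dotProduct_mulVec_nonneg (Pi.single i 1)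
  simpa [dotProduct, Matrix.mulVec, Pi.single_apply, Finset.sum_ite_eq',
    Finset.sum_ite_eq] using h

lemma psd_pair {A : Matrix (Fin 5) (Fin 5) ℝ} (hA : A.PosSemidef) (i j : Fin 5)
    (hij : i ≠ j) : (A i j) ^ 2 ≤ A i i * A j j := by
  have hsym : A j i = A i j := by
    have h := hA.1
    have := congrFun (congrFun h i) j
    simpa [Matrix.conjTranspose_apply] using this
  have key : ∀ s : ℝ, 0 ≤ A i i * (s * s) + (2 * A i j) * s + A j j := by
    intro s
    have h := hA.dotProduct_mulVec_nonneg (Pi.single i s + Pi.single j 1)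
    have hexp : dotProduct (star (Pi.single i s + Pi.single j 1))
        (A.mulVec (Pi.single i s + Pi.single j 1))
        = A i i * (s * s) + (2 * A i j) * s + A j j := by
      have hv : star (Pi.single i s + Pi.single j 1 : Fin 5 → ℝ)
          = Pi.single i s + Pi.single j 1 := by
        funext k; simp
      rw [hv, Matrix.mulVec_add, dotProduct_add, add_dotProduct,
        add_dotProduct]
      have h1 : ∀ (x : ℝ) (k : Fin 5), A.mulVec (Pi.single k x) = fun l => A l k * x := by
        intro x k
        funext l
        simp [Matrix.mulVec, dotProduct, Pi.single_apply, Finset.sum_ite_eq,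
          Finset.sum_ite_eq']
      rw [h1, h1]
      have h2 : ∀ (x : ℝ) (k : Fin 5) (w : Fin 5 → ℝ),
          dotProduct (Pi.single k x) w = x * w k := by
        intro x k w
        simp [dotProduct, Pi.single_apply, Finset.sum_ite_eq, Finset.sum_ite_eq']
      rw [h2, h2, h2, h2]
      rw [hsym]
      ring
    rw [hexp] at h
    exact h
  have hd := discrim_le_zero key
  rw [discrim] at hd
  nlinarith [hd]

section Calc
variable {u : (Fin 5 → ℝ) → ℝ}

lemma hasFDerivAt_pd (hu : ContDiff ℝ 2 u) (j : Fin 5) (x : Fin 5 → ℝ) :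
    HasFDerivAt (pd j u)
      ((ContinuousLinearMap.apply ℝ ℝ (Pi.single j 1)).comp (fderiv ℝ (fderiv ℝ u) x)) x := by
  have hf'd : Differentiable ℝ (fderiv ℝ u) :=
    (hu.fderiv_right (m := 1) (by norm_num)).differentiable one_ne_zero
  exact (ContinuousLinearMap.apply ℝ ℝ (Pi.single j 1)).hasFDerivAt.comp x (hf'd x).hasFDerivAt

lemma pd2_eq (hu : ContDiff ℝ 2 u) (i j : Fin 5) (x : Fin 5 → ℝ) :
    pd2 i j u x = fderiv ℝ (fderiv ℝ u) x (Pi.single i 1) (Pi.single j 1) := by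
  have h := (hasFDerivAt_pd hu j x).fderiv
  rw [pd2, pd, h]
  rfl

lemma pd2_symm (hu : ContDiff ℝ 2 u) (i j : Fin 5) (x : Fin 5 → ℝ) :
    pd2 i j u x = pd2 j i u x := by
  rw [pd2_eq hu, pd2_eq hu]
  exact second_derivative_symmetric
    (fun y => (hu.differentiable two_ne_zero y).hasFDerivAt)
    ((hu.fderiv_right (m := 1) (by norm_num)).differentiable one_ne_zero x).hasFDerivAt _ _

noncomputable def hessCLM (u : (Fin 5 → ℝ) → ℝ) (x : Fin 5 → ℝ) :
    (Fin 5 → ℝ) →L[ℝ] (Fin 5 → ℝ) :=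
  ContinuousLinearMap.pi fun k =>
    (ContinuousLinearMap.apply ℝ ℝ (Pi.single k 1)).comp (fderiv ℝ (fderiv ℝ u) x)

lemma hasFDerivAt_grad (hu : ContDiff ℝ 2 u) (x : Fin 5 → ℝ) :
    HasFDerivAt (fun y => (fun i => pd i u y)) (hessCLM u x) x := by
  rw [hasFDerivAt_pi']
  intro i
  have h := hasFDerivAt_pd hu i x
  exact h

noncomputable def hessMat (u : (Fin 5 → ℝ) → ℝ) (x : Fin 5 → ℝ) :
    Matrix (Fin 5) (Fin 5) ℝ :=
  Matrix.of fun i j => pd2 i j u x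

lemma det_hessCLM (hu : ContDiff ℝ 2 u) (x : Fin 5 → ℝ) :
    (hessCLM u x).det = (hessMat u x).det := by
  have : (hessCLM u x).det = LinearMap.det ((hessCLM u x) : (Fin 5 → ℝ) →ₗ[ℝ] (Fin 5 → ℝ)) := rfl
  rw [this, ← LinearMap.det_toMatrix (Pi.basisFun ℝ (Fin 5))]
  congr 1
  ext i j
  rw [LinearMap.toMatrix_apply]
  simp only [Pi.basisFun_apply, Pi.basisFun_repr]
  show (hessCLM u x) (Pi.single j 1) i = hessMat u x i j
  rw [hessMat, Matrix.of_apply, pd2_symm hu, pd2_eq hu]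
  simp [hessCLM]

lemma bilin_apply (B : (Fin 5 → ℝ) →L[ℝ] (Fin 5 → ℝ) →L[ℝ] ℝ) (v w : Fin 5 → ℝ) :
    B v w = ∑ i, ∑ j, v i * w j * B (Pi.single i 1) (Pi.single j 1) := by
  have hv : ∑ i, (v i) • (Pi.single i 1 : Fin 5 → ℝ) = v := by
    calc ∑ i, (v i) • (Pi.single i 1 : Fin 5 → ℝ) = ∑ i, Pi.single i (v i) :=
          Finset.sum_congr rfl fun i _ => by rw [← Pi.single_smul, smul_eq_mul, mul_one]
      _ = v := Finset.univ_sum_single v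
  have hw : ∑ j, (w j) • (Pi.single j 1 : Fin 5 → ℝ) = w := by
    calc ∑ j, (w j) • (Pi.single j 1 : Fin 5 → ℝ) = ∑ j, Pi.single j (w j) :=
          Finset.sum_congr rfl fun j _ => by rw [← Pi.single_smul, smul_eq_mul, mul_one]
      _ = w := Finset.univ_sum_single w
  have h1 : ∀ z : Fin 5 → ℝ, B z w = ∑ j, w j * B z (Pi.single j 1) := by
    intro z
    conv_lhs => rw [← hw]
    rw [map_sum]
    exact Finset.sum_congr rfl fun j _ => by
      rw [_root_.map_smul, smul_eq_mul]
  have h2 : ∀ j, B v (Pi.single j 1) = ∑ i, v i * B (Pi.single i 1) (Pi.single j 1) := by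
    intro j
    conv_lhs => rw [← hv]
    rw [map_sum, ContinuousLinearMap.sum_apply]
    exact Finset.sum_congr rfl fun i _ => by
      rw [_root_.map_smul, ContinuousLinearMap.smul_apply, smul_eq_mul]
  rw [h1 v]
  calc ∑ j, w j * B v (Pi.single j 1)
      = ∑ j, ∑ i, w j * (v i * B (Pi.single i 1) (Pi.single j 1)) :=
        Finset.sum_congr rfl fun j _ => by rw [h2 j, Finset.mul_sum]
    _ = ∑ i, ∑ j, v i * w j * B (Pi.single i 1) (Pi.single j 1) := by
        rw [Finset.sum_comm]
        exact Finset.sum_congr rfl fun i _ => Finset.sum_congr rfl fun j _ => by ring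

lemma quad_nonneg (hu : ContDiff ℝ 2 u) {x₀ x : Fin 5 → ℝ} (hx : eucNorm (x - x₀) < 1/2)
    (hsupp : ∀ y, eucNorm (y - x₀) < 1/2 →
      u x + ∑ i, pd i u x * (y i - x i) ≤ u y)
    (v : Fin 5 → ℝ) : 0 ≤ fderiv ℝ (fderiv ℝ u) x v v := by
  have hud : Differentiable ℝ u := hu.differentiable two_ne_zero
  have hf'd : Differentiable ℝ (fderiv ℝ u) :=
    (hu.fderiv_right (m := 1) (by norm_num)).differentiable one_ne_zero
  set c : ℝ := ∑ i, pd i u x * v i with hc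
  set γ : ℝ → (Fin 5 → ℝ) := fun t => x + t • v with hγdef
  have hγ : ∀ t, HasDerivAt γ v t := by
    intro t
    have : HasDerivAt (fun t : ℝ => t • v) ((1:ℝ) • v) t := (hasDerivAt_id t).smul_const v
    rw [one_smul] at this
    exact this.const_add x
  set w : ℝ → ℝ := fun t => u (γ t) - t * c with hwdef
  set w1 : ℝ → ℝ := fun t => fderiv ℝ u (γ t) v - c with hw1def
  have hw : ∀ t, HasDerivAt w (w1 t) t := by
    intro t
    exact ((hud (γ t)).hasFDerivAt.comp_hasDerivAt t (hγ t)).sub (hasDerivAt_mul_const c)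
  have hγ0 : γ 0 = x := by simp [hγdef]
  have hw1 : HasDerivAt w1 (fderiv ℝ (fderiv ℝ u) x v v) 0 := by
    have hcomp : HasDerivAt (fun t => fderiv ℝ u (γ t) v)
        (((ContinuousLinearMap.apply ℝ ℝ v).comp (fderiv ℝ (fderiv ℝ u) (γ 0))) v) 0 := by
      exact ((ContinuousLinearMap.apply ℝ ℝ v).hasFDerivAt.comp (γ 0)
        (hf'd (γ 0)).hasFDerivAt).comp_hasDerivAt 0 (hγ 0)
    rw [hγ0] at hcomp
    exact hcomp.sub_const c
  have hmin : IsLocalMin w 0 := by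
    have hcont : ContinuousAt (fun t : ℝ => eucNorm (γ t - x₀)) 0 := by
      apply Continuous.continuousAt
      exact continuous_eucNorm.comp (by fun_prop)
    have h0 : eucNorm (γ 0 - x₀) < 1/2 := by rw [hγ0]; exact hx
    have hev : ∀ᶠ t in nhds (0:ℝ), eucNorm (γ t - x₀) < 1/2 :=
      hcont.eventually_lt continuousAt_const h0
    filter_upwards [hev] with t ht
    have hs := hsupp (γ t) ht
    have hγi : ∀ i, γ t i - x i = t * v i := by intro i; simp [hγdef]
    have : ∑ i, pd i u x * (γ t i - x i) = t * c := by
      rw [hc, Finset.mul_sum]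
      exact Finset.sum_congr rfl fun i _ => by rw [hγi i]; ring
    rw [this] at hs
    have hw0 : w 0 = u x := by simp [hwdef, hγ0]
    have hwt : w t = u (γ t) - t * c := rfl
    rw [hw0, hwt]
    linarith
  exact sd_test hw hw1 hmin

lemma hessMat_posSemidef (hu : ContDiff ℝ 2 u) {x₀ x : Fin 5 → ℝ}
    (hx : eucNorm (x - x₀) < 1/2)
    (hsupp : ∀ y, eucNorm (y - x₀) < 1/2 →
      u x + ∑ i, pd i u x * (y i - x i) ≤ u y) :
    (hessMat u x).PosSemidef := by
  refine Matrix.PosSemidef.of_dotProduct_mulVec_nonneg ?_ ?_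
  · show Matrix.conjTranspose (hessMat u x) = hessMat u x
    ext i j
    simp only [Matrix.conjTranspose_apply, hessMat, Matrix.of_apply, star_trivial]
    exact (pd2_symm hu j i x)
  · intro z
    have expand : dotProduct (star z) ((hessMat u x).mulVec z)
        = fderiv ℝ (fderiv ℝ u) x z z := by
      rw [bilin_apply (fderiv ℝ (fderiv ℝ u) x) z z]
      simp only [dotProduct, Matrix.mulVec, dotProduct, star_trivial, Pi.star_apply]
      refine Finset.sum_congr rfl fun i _ => ?_
      rw [Finset.mul_sum]
      refine Finset.sum_congr rfl fun j _ => ?_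
      rw [hessMat, Matrix.of_apply, pd2_eq hu]
      ring
    rw [expand]
    exact quad_nonneg hu hx hsupp z

end Calc

section UAux
variable (φ : (Fin 5 → ℝ) → ℝ) (x₀ : Fin 5 → ℝ)

lemma contDiff_uAux (hφ : ContDiff ℝ 2 φ) : ContDiff ℝ 2 (uAux φ x₀) := by
  apply (hφ.sub contDiff_const).add
  apply ContDiff.mul contDiff_const
  apply ContDiff.sum
  intro i _
  exact (((ContinuousLinearMap.proj (R := ℝ) (φ := fun _ : Fin 5 => ℝ) i).contDiff).sub
    contDiff_const).pow 2

lemma hasFDerivAt_uAux (hφ : ContDiff ℝ 2 φ) (x : Fin 5 → ℝ) :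
    HasFDerivAt (uAux φ x₀)
      (fderiv ℝ φ x + (4 * (1/48 : ℝ)) • ∑ j, ((x j - x₀ j) •
        (ContinuousLinearMap.proj (R := ℝ) (φ := fun _ : Fin 5 => ℝ) j) +
        (x j - x₀ j) • (ContinuousLinearMap.proj (R := ℝ) (φ := fun _ : Fin 5 => ℝ) j))) x := by
  have hsq : ∀ j : Fin 5, HasFDerivAt (fun y : Fin 5 → ℝ => (y j - x₀ j) ^ 2)
      ((x j - x₀ j) • (ContinuousLinearMap.proj (R := ℝ) (φ := fun _ : Fin 5 => ℝ) j) +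
        (x j - x₀ j) • (ContinuousLinearMap.proj (R := ℝ) (φ := fun _ : Fin 5 => ℝ) j)) x := by
    intro j
    have h1 : HasFDerivAt (fun y : Fin 5 → ℝ => y j - x₀ j)
        (ContinuousLinearMap.proj (R := ℝ) (φ := fun _ : Fin 5 => ℝ) j) x :=
      (ContinuousLinearMap.proj (R := ℝ) (φ := fun _ : Fin 5 => ℝ) j).hasFDerivAt.sub_const _
    have h2 := h1.mul h1
    have : (fun y : Fin 5 → ℝ => (y j - x₀ j) ^ 2)
        = fun y : Fin 5 → ℝ => (y j - x₀ j) * (y j - x₀ j) := by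
      funext y; ring
    rw [this]
    exact h2
  have hsum : HasFDerivAt (fun y : Fin 5 → ℝ => ∑ j, (y j - x₀ j) ^ 2)
      (∑ j, ((x j - x₀ j) • (ContinuousLinearMap.proj (R := ℝ) (φ := fun _ : Fin 5 => ℝ) j) +
        (x j - x₀ j) • (ContinuousLinearMap.proj (R := ℝ) (φ := fun _ : Fin 5 => ℝ) j))) x :=
    HasFDerivAt.fun_sum (fun j _ => hsq j)
  have hφ' : HasFDerivAt (fun y => φ y - sSup (φ '' Kcube)) (fderiv ℝ φ x) x :=
    ((hφ.differentiable two_ne_zero x).hasFDerivAt).sub_const _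
  exact hφ'.add (hsum.const_mul _)

lemma pd_uAux (hφ : ContDiff ℝ 2 φ) (i : Fin 5) (x : Fin 5 → ℝ) :
    pd i (uAux φ x₀) x = pd i φ x + (1/6) * (x i - x₀ i) := by
  rw [pd, (hasFDerivAt_uAux φ x₀ hφ x).fderiv]
  rw [ContinuousLinearMap.add_apply, ContinuousLinearMap.smul_apply,
    ContinuousLinearMap.sum_apply]
  have : ∀ j : Fin 5, (((x j - x₀ j) •
        (ContinuousLinearMap.proj (R := ℝ) (φ := fun _ : Fin 5 => ℝ) j) +
        (x j - x₀ j) • (ContinuousLinearMap.proj (R := ℝ) (φ := fun _ : Fin 5 => ℝ) j))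
        (Pi.single i 1 : Fin 5 → ℝ))
      = (x j - x₀ j) * ((Pi.single i 1 : Fin 5 → ℝ) j) + (x j - x₀ j) * ((Pi.single i 1 : Fin 5 → ℝ) j) := by
    intro j
    simp [ContinuousLinearMap.proj_apply]
  rw [Finset.sum_congr rfl (fun j _ => this j)]
  rw [Finset.sum_add_distrib]
  have hsingle : ∀ (j : Fin 5), (x j - x₀ j) * ((Pi.single i 1 : Fin 5 → ℝ) j)
      = if j = i then (x i - x₀ i) else 0 := by
    intro j
    rcases eq_or_ne j i with rfl | hne
    · simp
    · simp [Pi.single_apply, hne, (Ne.symm hne)]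
  rw [Finset.sum_congr rfl (fun j _ => hsingle j), Finset.sum_ite_eq' Finset.univ i fun _ => (x i - x₀ i)]
  simp only [Finset.mem_univ, if_true, smul_eq_mul]
  rw [pd]
  ring

lemma pd_pd_uAux (hφ : ContDiff ℝ 2 φ) (j : Fin 5) :
    pd j (uAux φ x₀) = fun y => pd j φ y + (1/6) * (y j - x₀ j) := by
  funext y
  exact pd_uAux φ x₀ hφ j y

lemma pd2_uAux (hφ : ContDiff ℝ 2 φ) (i j : Fin 5) (x : Fin 5 → ℝ) :
    pd2 i j (uAux φ x₀) x = pd2 i j φ x + (if i = j then (1/6 : ℝ) else 0) := by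
  rw [pd2, pd_pd_uAux φ x₀ hφ j]
  have h1 : HasFDerivAt (fun y => pd j φ y)
      ((ContinuousLinearMap.apply ℝ ℝ (Pi.single j 1)).comp (fderiv ℝ (fderiv ℝ φ) x)) x :=
    hasFDerivAt_pd hφ j x
  have h2 : HasFDerivAt (fun y : Fin 5 → ℝ => (1/6 : ℝ) * (y j - x₀ j))
      ((1/6 : ℝ) • (ContinuousLinearMap.proj (R := ℝ) (φ := fun _ : Fin 5 => ℝ) j)) x :=
    (((ContinuousLinearMap.proj (R := ℝ) (φ := fun _ : Fin 5 => ℝ) j).hasFDerivAt.sub_const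
      _).const_mul _)
  have h3 := h1.fun_add h2
  rw [pd, h3.fderiv]
  rw [ContinuousLinearMap.add_apply, ContinuousLinearMap.smul_apply,
    ContinuousLinearMap.proj_apply]
  have : pd2 i j φ x = ((ContinuousLinearMap.apply ℝ ℝ (Pi.single j 1)).comp
      (fderiv ℝ (fderiv ℝ φ) x)) (Pi.single i 1) := by
    rw [pd2_eq hφ]
    rfl
  rw [this]
  congr 1
  rcases eq_or_ne i j with rfl | hne
  · simp
  · simp [Pi.single_apply, hne, Ne.symm hne]

end UAux

set_option maxHeartbeats 1000000 in
open Pointwise in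
/-- Lower bound on the Lebesgue measure of `Γ_{ε₀}`. -/
theorem measure_Gamma_lower_bound
    (F φ : (Fin 5 → ℝ) → ℝ) (hF : Continuous F) (hFper : PeriodicPi F)
    (hφ : ContDiff ℝ 2 φ) (hφper : PeriodicPi φ) (heq : EqStar F φ)
    (x₀ : Fin 5 → ℝ) (hx₀ : x₀ ∈ Kcube) (hmin : ∀ y ∈ Kcube, φ x₀ ≤ φ y) :
    volume {v : Fin 5 → ℝ | eucNorm v < 1/2} *
        ENNReal.ofReal ((Real.exp (-sSup (F '' Kcube)) / 96) ^ 5)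
      ≤ volume (GammaSet φ x₀) := by
  classical
  set M := sSup (F '' Kcube) with hM
  set EM := Real.exp M with hEMdef
  have hEMpos : 0 < EM := Real.exp_pos M
  have hu : ContDiff ℝ 2 (uAux φ x₀) := contDiff_uAux φ x₀ hφ
  -- global minimality and F bound via periodicity
  have hgmin : ∀ x, φ x₀ ≤ φ x := by
    intro x
    obtain ⟨y, hy, hrep⟩ := exists_rep x
    rw [hrep φ hφper]
    exact hmin y hy
  have hFle : ∀ x, F x ≤ M := by
    intro x
    obtain ⟨y, hy, hrep⟩ := exists_rep x
    rw [hrep F hFper, hM]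
    exact le_csSup ((isCompact_Icc.image hF).bddAbove) ⟨y, hy, rfl⟩
  -- continuity facts
  have hcont_pd : ∀ i, Continuous (fun x => pd i (uAux φ x₀) x) := by
    intro i
    have h1 : Continuous (fderiv ℝ (uAux φ x₀)) :=
      ((hu.fderiv_right (m := 1) (by norm_num)).continuous)
    exact (ContinuousLinearMap.apply ℝ ℝ (Pi.single i 1)).continuous.comp h1
  have hcont_u : Continuous (uAux φ x₀) := hu.continuous
  have hopen1 : IsOpen {x : Fin 5 → ℝ | eucNorm (x - x₀) < 1/2} := by
    have : Continuous fun x : Fin 5 → ℝ => eucNorm (x - x₀) :=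
      continuous_eucNorm.comp (by fun_prop)
    exact isOpen_lt this continuous_const
  have hΓmeas : MeasurableSet (GammaSet φ x₀) := by
    have h2 : IsClosed {x : Fin 5 → ℝ | ∀ y : Fin 5 → ℝ, eucNorm (y - x₀) < 1/2 →
        uAux φ x₀ x + ∑ i, pd i (uAux φ x₀) x * (y i - x i) ≤ uAux φ x₀ y} := by
      have heq2 : {x : Fin 5 → ℝ | ∀ y : Fin 5 → ℝ, eucNorm (y - x₀) < 1/2 →
          uAux φ x₀ x + ∑ i, pd i (uAux φ x₀) x * (y i - x i) ≤ uAux φ x₀ y}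
          = ⋂ (y : Fin 5 → ℝ), ⋂ (_ : eucNorm (y - x₀) < 1/2),
            {x | uAux φ x₀ x + ∑ i, pd i (uAux φ x₀) x * (y i - x i) ≤ uAux φ x₀ y} := by
        ext x; simp
      rw [heq2]
      refine isClosed_iInter fun y => isClosed_iInter fun _ => ?_
      refine isClosed_le ?_ continuous_const
      exact hcont_u.add (continuous_finset_sum _ fun i _ =>
        (hcont_pd i).mul (continuous_const.sub (continuous_apply i)))
    have h3 : IsOpen {x : Fin 5 → ℝ | eucNorm (fun i => pd i (uAux φ x₀) x) < (1/48)/2} := by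
      have : Continuous fun x : Fin 5 → ℝ => eucNorm (fun i => pd i (uAux φ x₀) x) :=
        continuous_eucNorm.comp (continuous_pi fun i => hcont_pd i)
      exact isOpen_lt this continuous_const
    have hset : GammaSet φ x₀ = {x : Fin 5 → ℝ | eucNorm (x - x₀) < 1/2} ∩
        ({x : Fin 5 → ℝ | ∀ y : Fin 5 → ℝ, eucNorm (y - x₀) < 1/2 →
          uAux φ x₀ x + ∑ i, pd i (uAux φ x₀) x * (y i - x i) ≤ uAux φ x₀ y} ∩
         {x : Fin 5 → ℝ | eucNorm (fun i => pd i (uAux φ x₀) x) < (1/48)/2}) := by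
      ext x
      simp only [GammaSet, Set.mem_setOf_eq, Set.mem_inter_iff]
    rw [hset]
    exact hopen1.measurableSet.inter (h2.measurableSet.inter h3.measurableSet)
  -- the gradient map covers a small ball
  have hcover : {p : Fin 5 → ℝ | eucNorm p < 1/96}
      ⊆ (fun y => (fun i => pd i (uAux φ x₀) y)) '' (GammaSet φ x₀) := by
    rintro p hp
    rw [Set.mem_setOf_eq] at hp
    have hpnn := eucNorm_nonneg p
    set v : (Fin 5 → ℝ) → ℝ := fun y => uAux φ x₀ y - ∑ i, p i * y i with hvdef
    have hvcont : Continuous v :=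
      hcont_u.sub (continuous_finset_sum _ fun i _ => continuous_const.mul (continuous_apply i))
    set C : Set (Fin 5 → ℝ) := {y | eucNorm (y - x₀) ≤ 1/2} with hCdef
    have hCclosed : IsClosed C := by
      refine isClosed_le ?_ continuous_const
      exact continuous_eucNorm.comp (by fun_prop)
    have hCcompact : IsCompact C := by
      refine (isCompact_closedBall x₀ (1/2)).of_isClosed_subset hCclosed ?_
      intro y hy
      rw [Metric.mem_closedBall]
      rw [dist_pi_le_iff (by norm_num)]
      intro i
      rw [Real.dist_eq]
      calc |y i - x₀ i| = |(y - x₀) i| := by rw [Pi.sub_apply]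
        _ ≤ eucNorm (y - x₀) := abs_le_eucNorm _ i
        _ ≤ 1/2 := hy
    have hx₀C : x₀ ∈ C := by
      have : eucNorm (x₀ - x₀) = 0 := by
        simp [eucNorm]
      simp only [hCdef, Set.mem_setOf_eq, this]
      norm_num
    obtain ⟨z, hzC, hzmin⟩ := hCcompact.exists_isMinOn ⟨x₀, hx₀C⟩ hvcont.continuousOn
    have hzC' : eucNorm (z - x₀) ≤ 1/2 := hzC
    have hCS : ∑ i, p i * (z i - x₀ i) ≤ eucNorm p * eucNorm (z - x₀) := by
      have h := eucNorm_CS p (z - x₀)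
      simpa [Pi.sub_apply] using h
    have hzlt : eucNorm (z - x₀) < 1/2 := by
      rcases lt_or_eq_of_le hzC' with h | h
      · exact h
      · exfalso
        have hzsum : ∑ i, (z i - x₀ i)^2 = (1/2)^2 := by
          have h1 : eucNorm (z - x₀) ^ 2 = ∑ i, ((z - x₀) i)^2 := eucNorm_sq _
          rw [h] at h1
          have h2 : ∑ i, (z i - x₀ i)^2 = ∑ i, ((z - x₀) i)^2 :=
            Finset.sum_congr rfl fun i _ => by rw [Pi.sub_apply]
          rw [h2, ← h1]
        have hminz := hzmin hx₀C
        have hvz : v z = φ z - sSup (φ '' Kcube) + 4 * (1/48) * ∑ i, (z i - x₀ i)^2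
            - ∑ i, p i * z i := rfl
        have hvx0 : v x₀ = φ x₀ - sSup (φ '' Kcube) + 4 * (1/48) * ∑ i, (x₀ i - x₀ i)^2
            - ∑ i, p i * x₀ i := rfl
        have h00 : ∑ i, (x₀ i - x₀ i)^2 = (0:ℝ) := by simp
        have hsplit : ∑ i, p i * (z i - x₀ i) = ∑ i, p i * z i - ∑ i, p i * x₀ i := by
          rw [← Finset.sum_sub_distrib]
          exact Finset.sum_congr rfl fun i _ => by ring
        have hφz := hgmin z
        have hCS2 : eucNorm p * eucNorm (z - x₀) < 1/192 := by
          rw [h]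
          nlinarith
        rw [Set.mem_setOf_eq] at hminz
        rw [hvz, hvx0, h00, hzsum] at hminz
        nlinarith [hminz, hCS, hCS2, hsplit, hφz]
    -- z is an interior local minimum
    have hball_nhds : {y : Fin 5 → ℝ | eucNorm (y - x₀) < 1/2} ∈ nhds z :=
      hopen1.mem_nhds hzlt
    have hCn : C ∈ nhds z :=
      Filter.mem_of_superset hball_nhds (fun y hy => by
        simp only [hCdef, Set.mem_setOf_eq]
        exact le_of_lt hy)
    have hlocal : IsLocalMin v z := hzmin.isLocalMin hCn
    have hfderiv0 : fderiv ℝ v z = 0 := hlocal.fderiv_eq_zero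
    have hvd : HasFDerivAt v (fderiv ℝ (uAux φ x₀) z -
        ∑ i, (p i) • (ContinuousLinearMap.proj (R := ℝ) (φ := fun _ : Fin 5 => ℝ) i)) z := by
      refine HasFDerivAt.sub ((hu.differentiable two_ne_zero z).hasFDerivAt) ?_
      exact HasFDerivAt.fun_sum fun i _ =>
        ((ContinuousLinearMap.proj (R := ℝ) (φ := fun _ : Fin 5 => ℝ) i).hasFDerivAt.const_mul
          (p i))
    have hzero : fderiv ℝ (uAux φ x₀) z -
        ∑ i, (p i) • (ContinuousLinearMap.proj (R := ℝ) (φ := fun _ : Fin 5 => ℝ) i) = 0 := by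
      rw [← hvd.fderiv]
      exact hfderiv0
    have hgrad : ∀ i, pd i (uAux φ x₀) z = p i := by
      intro i
      have h := congrArg (fun L : (Fin 5 → ℝ) →L[ℝ] ℝ => L (Pi.single i 1)) hzero
      simp only [ContinuousLinearMap.sub_apply, ContinuousLinearMap.sum_apply,
        ContinuousLinearMap.smul_apply, ContinuousLinearMap.proj_apply,
        ContinuousLinearMap.zero_apply] at h
      have hs : ∑ j, p j • (Pi.single i 1 : Fin 5 → ℝ) j = p i := by
        have : ∀ j, p j • (Pi.single i 1 : Fin 5 → ℝ) j = if j = i then p i else 0 := by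
          intro j
          rcases eq_or_ne j i with rfl | hne
          · simp
          · simp [Pi.single_apply, hne, Ne.symm hne]
        rw [Finset.sum_congr rfl fun j _ => this j]
        simp
      rw [hs] at h
      rw [pd]
      linarith [sub_eq_zero.1 h]
    refine ⟨z, ⟨hzlt, ?_, ?_⟩, ?_⟩
    · intro y hy
      have hyC : y ∈ C := by
        simp only [hCdef, Set.mem_setOf_eq]
        exact le_of_lt hy
      have hvyz := hzmin hyC
      rw [Set.mem_setOf_eq] at hvyz
      have hsplit : ∑ i, pd i (uAux φ x₀) z * (y i - z i)
          = ∑ i, p i * y i - ∑ i, p i * z i := by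
        rw [← Finset.sum_sub_distrib]
        refine Finset.sum_congr rfl fun i _ => ?_
        rw [hgrad i]; ring
      rw [hsplit]
      have h1 : v z ≤ v y := hvyz
      simp only [hvdef] at h1
      linarith
    · have hfun : (fun i => pd i (uAux φ x₀) z) = p := funext hgrad
      rw [hfun]
      calc eucNorm p < 1/96 := hp
        _ = (1/48)/2 := by norm_num
    · exact funext hgrad
  -- determinant bound on the Gamma set
  have hdetbound : ∀ x ∈ GammaSet φ x₀,
      ENNReal.ofReal |(hessCLM (uAux φ x₀) x).det| ≤ ENNReal.ofReal (((21/25) * EM)^5) := by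
    intro x hx
    obtain ⟨hx1, hx2, hx3⟩ := hx
    have hPSD := hessMat_posSemidef hu hx1 hx2
    set H := hessMat (uAux φ x₀) x with hHdef
    have hdd : ∀ i, H i i = pd2 i i φ x + 1/6 := by
      intro i
      show pd2 i i (uAux φ x₀) x = pd2 i i φ x + 1/6
      rw [pd2_uAux φ x₀ hφ, if_pos rfl]
    have hod : ∀ i : Fin 5, i ≠ 4 → H i 4 = pd2 i 4 φ x := by
      intro i hi
      show pd2 i 4 (uAux φ x₀) x = pd2 i 4 φ x
      rw [pd2_uAux φ x₀ hφ, if_neg hi, add_zero]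
    have hn0 := psd_diag_nonneg hPSD 0
    have hn1 := psd_diag_nonneg hPSD 1
    have hn2 := psd_diag_nonneg hPSD 2
    have hn3 := psd_diag_nonneg hPSD 3
    have hn4 := psd_diag_nonneg hPSD 4
    have hp0 := psd_pair hPSD 0 4 (by decide)
    have hp1 := psd_pair hPSD 1 4 (by decide)
    have hp2 := psd_pair hPSD 2 4 (by decide)
    have hp3 := psd_pair hPSD 3 4 (by decide)
    have hEq := heq x
    have hFx : Real.exp (F x) ≤ EM := by
      rw [hEMdef]
      exact Real.exp_le_exp.2 (hFle x)
    have e00 : pd2 0 0 φ x = H 0 0 - 1/6 := by rw [hdd 0]; ring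
    have e11 : pd2 1 1 φ x = H 1 1 - 1/6 := by rw [hdd 1]; ring
    have e22 : pd2 2 2 φ x = H 2 2 - 1/6 := by rw [hdd 2]; ring
    have e33 : pd2 3 3 φ x = H 3 3 - 1/6 := by rw [hdd 3]; ring
    have e44 : pd2 4 4 φ x = H 4 4 - 1/6 := by rw [hdd 4]; ring
    have e04 : pd2 0 4 φ x = H 0 4 := (hod 0 (by decide)).symm
    have e14 : pd2 1 4 φ x = H 1 4 := (hod 1 (by decide)).symm
    have e24 : pd2 2 4 φ x = H 2 4 := (hod 2 (by decide)).symm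
    have e34 : pd2 3 4 φ x = H 3 4 := (hod 3 (by decide)).symm
    rw [e00, e11, e22, e33, e44, e04, e14, e24, e34] at hEq
    have hsq : (H 0 4)^2 + (H 1 4)^2 + (H 2 4)^2 + (H 3 4)^2
        ≤ (H 0 0 + H 1 1 + H 2 2 + H 3 3) * H 4 4 := by nlinarith
    have htr5 : (H 0 0 + H 1 1 + H 2 2 + H 3 3 + H 4 4) / 5 ≤ (21/25) * EM := by
      nlinarith
    have htrace : H.trace = H 0 0 + H 1 1 + H 2 2 + H 3 3 + H 4 4 := by
      rw [Matrix.trace, Fin.sum_univ_five]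
      simp only [Matrix.diag_apply]
    have hdet : H.det ≤ ((21/25) * EM)^5 := by
      refine le_trans (det_le_trace_pow hPSD) ?_
      rw [htrace]
      refine pow_le_pow_left₀ ?_ htr5 5
      positivity
    rw [det_hessCLM hu x, ← hHdef]
    rw [abs_of_nonneg (det_nonneg_of_psd hPSD)]
    exact ENNReal.ofReal_le_ofReal hdet
  -- area formula
  have harea := addHaar_image_le_lintegral_abs_det_fderiv (volume : Measure (Fin 5 → ℝ))
    hΓmeas (fun x _ => (hasFDerivAt_grad hu x).hasFDerivWithinAt)
  have hlint : ∫⁻ x in GammaSet φ x₀, ENNReal.ofReal |(hessCLM (uAux φ x₀) x).det| ∂volume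
      ≤ ENNReal.ofReal (((21/25) * EM)^5) * volume (GammaSet φ x₀) := by
    calc ∫⁻ x in GammaSet φ x₀, ENNReal.ofReal |(hessCLM (uAux φ x₀) x).det| ∂volume
        ≤ ∫⁻ _x in GammaSet φ x₀, ENNReal.ofReal (((21/25) * EM)^5) ∂volume :=
          setLIntegral_mono measurable_const hdetbound
      _ = ENNReal.ofReal (((21/25) * EM)^5) * volume (GammaSet φ x₀) :=
          setLIntegral_const _ _
  have hball : volume {p : Fin 5 → ℝ | eucNorm p < 1/96}
      ≤ volume ((fun y => (fun i => pd i (uAux φ x₀) y)) '' (GammaSet φ x₀)) :=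
    measure_mono hcover
  -- scaling of the euclidean ball
  have hscale : volume {p : Fin 5 → ℝ | eucNorm p < 1/96}
      = ENNReal.ofReal ((1/48 : ℝ)^5) * volume {v : Fin 5 → ℝ | eucNorm v < 1/2} := by
    have hseteq : {p : Fin 5 → ℝ | eucNorm p < 1/96}
        = ((1/48 : ℝ) • {v : Fin 5 → ℝ | eucNorm v < 1/2} : Set (Fin 5 → ℝ)) := by
      ext p
      rw [Set.mem_smul_set_iff_inv_smul_mem₀ (by norm_num : (1/48:ℝ) ≠ 0)]
      simp only [Set.mem_setOf_eq]
      rw [eucNorm_smul (by norm_num : (0:ℝ) ≤ (1/48:ℝ)⁻¹)]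
      constructor
      · intro h; nlinarith [eucNorm_nonneg p]
      · intro h; nlinarith [eucNorm_nonneg p]
    rw [hseteq, Measure.addHaar_smul]
    congr 1
    rw [Module.finrank_fintype_fun_eq_card]
    simp only [Fintype.card_fin]
    rw [abs_of_nonneg (by norm_num : (0:ℝ) ≤ (1/48:ℝ)^5)]
  -- final chain
  have harith : (Real.exp (-M)/96)^5 * ((21/25) * EM)^5 ≤ (1/48 : ℝ)^5 := by
    have hexp : Real.exp (-M) * EM = 1 := by
      rw [hEMdef, Real.exp_neg]
      field_simp
    rw [← mul_pow]
    have : Real.exp (-M)/96 * ((21/25) * EM) = 21/2400 := by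
      field_simp
      nlinarith [hexp]
    rw [this]
    norm_num
  have hD0 : (ENNReal.ofReal (((21/25) * EM)^5)) ≠ 0 := by
    refine ne_of_gt (ENNReal.ofReal_pos.2 ?_)
    positivity
  have hDtop : (ENNReal.ofReal (((21/25) * EM)^5)) ≠ ⊤ := ENNReal.ofReal_ne_top
  rw [← ENNReal.mul_le_mul_iff_left hD0 hDtop]
  calc volume {v : Fin 5 → ℝ | eucNorm v < 1/2} * ENNReal.ofReal ((Real.exp (-M)/96)^5)
        * ENNReal.ofReal (((21/25) * EM)^5)
      = volume {v : Fin 5 → ℝ | eucNorm v < 1/2}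
        * ENNReal.ofReal ((Real.exp (-M)/96)^5 * ((21/25) * EM)^5) := by
        rw [mul_assoc, ← ENNReal.ofReal_mul (by positivity)]
    _ ≤ volume {v : Fin 5 → ℝ | eucNorm v < 1/2} * ENNReal.ofReal ((1/48 : ℝ)^5) :=
        mul_le_mul_right (ENNReal.ofReal_le_ofReal harith) _
    _ = ENNReal.ofReal ((1/48 : ℝ)^5) * volume {v : Fin 5 → ℝ | eucNorm v < 1/2} := mul_comm _ _
    _ = volume {p : Fin 5 → ℝ | eucNorm p < 1/96} := hscale.symm
    _ ≤ volume ((fun y => (fun i => pd i (uAux φ x₀) y)) '' (GammaSet φ x₀)) := hball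
    _ ≤ ∫⁻ x in GammaSet φ x₀, ENNReal.ofReal |(hessCLM (uAux φ x₀) x).det| ∂volume := harea
    _ ≤ ENNReal.ofReal (((21/25) * EM)^5) * volume (GammaSet φ x₀) := hlint
    _ = volume (GammaSet φ x₀) * ENNReal.ofReal (((21/25) * EM)^5) := mul_comm _ _
end

section
/- Let F ∈ C²(T⁶) and let φ ∈ C⁴(T⁶) be a solution of equation (†) with Δφ + 2 > 0 everywhere. Set μ = 1/(max(Δφ+2) · (1 + ‖∇φ‖_{C⁰})) and let p₀ be a point where (Δφ+2)e^{−μφ} attains its maximum. Assume that at p₀, for every ξ ∈ ℝ⁶, both of the following hold: (i) B(ξ₁²+ξ₂²+ξ₃²+ξ₄²)+A(ξ₅²+ξ₆²) −2a₁(ξ₃ξ₅−ξ₂ξ₆)−2a₂(ξ₄ξ₅−ξ₁ξ₆)−2a₃(ξ₄ξ₆+ξ₁ξ₅)−2a₄(ξ₃ξ₆+ξ₂ξ₅) ≥ 0, and (ii) B(ξ₁²+ξ₂²+ξ₃²+ξ₄²)+A(ξ₅²+ξ₆²) ≥ 2|a₁|(ξ₃ξ₅+ξ₂ξ₆)+2|a₂|(ξ₄ξ₅+ξ₁ξ₆)+2|a₃|(ξ₄ξ₆+ξ₁ξ₅)+2|a₄|(ξ₃ξ₆+ξ₂ξ₅).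 Then μ(Δφ(p₀)+2)² ≤ −Δ(e^F)(p₀) + 2μ(Δφ(p₀)+2)e^{F(p₀)} + 3μ²(Δφ(p₀)+2)²|∇φ(p₀)|². -/
open MeasureTheory

/-- `A = φ₁₁ + φ₂₂ + φ₃₃ + φ₄₄ + 1` on `T⁶`. -/
noncomputable def A6 (φ : (Fin 6 → ℝ) → ℝ) : (Fin 6 → ℝ) → ℝ :=
  fun x => pd2 0 0 φ x + pd2 1 1 φ x + pd2 2 2 φ x + pd2 3 3 φ x + 1

/-- `B = φ₅₅ + φ₆₆ + 1` on `T⁶`. -/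
noncomputable def B6 (φ : (Fin 6 → ℝ) → ℝ) : (Fin 6 → ℝ) → ℝ :=
  fun x => pd2 4 4 φ x + pd2 5 5 φ x + 1

/-- `a₁ = φ₃₅ − φ₂₆`. -/
noncomputable def a₁6 (φ : (Fin 6 → ℝ) → ℝ) : (Fin 6 → ℝ) → ℝ :=
  fun x => pd2 2 4 φ x - pd2 1 5 φ x

/-- `a₂ = φ₄₅ − φ₁₆`. -/
noncomputable def a₂6 (φ : (Fin 6 → ℝ) → ℝ) : (Fin 6 → ℝ) → ℝ :=
  fun x => pd2 3 4 φ x - pd2 0 5 φ x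

/-- `a₃ = φ₄₆ + φ₁₅`. -/
noncomputable def a₃6 (φ : (Fin 6 → ℝ) → ℝ) : (Fin 6 → ℝ) → ℝ :=
  fun x => pd2 3 5 φ x + pd2 0 4 φ x

/-- `a₄ = φ₃₆ + φ₂₅`. -/
noncomputable def a₄6 (φ : (Fin 6 → ℝ) → ℝ) : (Fin 6 → ℝ) → ℝ :=
  fun x => pd2 2 5 φ x + pd2 1 4 φ x

/-- Equation (†): the reduction of the quaternionic Monge–Ampère equation on `M₂` to the
base `T⁶` for `T²`-invariant data. -/
def EqDagger (F φ : (Fin 6 → ℝ) → ℝ) : Prop :=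
  ∀ x : Fin 6 → ℝ,
    A6 φ x * B6 φ x - (a₁6 φ x) ^ 2 - (a₂6 φ x) ^ 2 - (a₃6 φ x) ^ 2 - (a₄6 φ x) ^ 2
      = Real.exp (F x)

section helpers

variable {n : ℕ} {f g : (Fin n → ℝ) → ℝ} {x v : Fin n → ℝ} {i j : Fin n}

theorem pd_add (hf : DifferentiableAt ℝ f x) (hg : DifferentiableAt ℝ g x) :
    pd i (fun y => f y + g y) x = pd i f x + pd i g x := by
  simp [pd, fderiv_fun_add hf hg]

theorem pd_sub (hf : DifferentiableAt ℝ f x) (hg : DifferentiableAt ℝ g x) :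
    pd i (fun y => f y - g y) x = pd i f x - pd i g x := by
  simp [pd, fderiv_fun_sub hf hg]

theorem pd_mul (hf : DifferentiableAt ℝ f x) (hg : DifferentiableAt ℝ g x) :
    pd i (fun y => f y * g y) x = f x * pd i g x + g x * pd i f x := by
  simp [pd, fderiv_fun_mul hf hg]

theorem pd_const (c : ℝ) : pd (n := n) i (fun _ => c) x = 0 := by simp [pd]

theorem pd_add_const (c : ℝ) : pd i (fun y => f y + c) x = pd i f x := by
  simp [pd, fderiv_add_const]

theorem pd_sq (hf : DifferentiableAt ℝ f x) :
    pd i (fun y => (f y) ^ 2) x = 2 * f x * pd i f x := by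
  have : (fun y => (f y) ^ 2) = fun y => f y * f y := by funext y; ring
  rw [this, pd_mul hf hf]; ring

theorem pd_exp (hf : DifferentiableAt ℝ f x) :
    pd i (fun y => Real.exp (f y)) x = Real.exp (f x) * pd i f x := by
  rw [pd, (hf.hasFDerivAt.exp).fderiv]; simp [pd]

theorem pd_const_mul (c : ℝ) (hf : DifferentiableAt ℝ f x) :
    pd i (fun y => c * f y) x = c * pd i f x := by
  simp [pd, fderiv_const_mul hf]

theorem pd_sum {ι : Type*} {s : Finset ι} {F : ι → (Fin n → ℝ) → ℝ}
    (hf : ∀ k ∈ s, DifferentiableAt ℝ (F k) x) :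
    pd i (fun y => ∑ k ∈ s, F k y) x = ∑ k ∈ s, pd i (F k) x := by
  simp [pd, fderiv_fun_sum hf]

theorem contDiff_pd {m : ℕ} (hf : ContDiff ℝ (m + 1 : ℕ) f) (i : Fin n) :
    ContDiff ℝ (m : ℕ) (pd i f) := by
  have h1 : ContDiff ℝ (m : ℕ) (fderiv ℝ f) := hf.fderiv_right (by norm_cast)
  exact (ContinuousLinearMap.apply ℝ ℝ (Pi.single i 1)).contDiff.comp h1

theorem cast2 {k : ℕ} (hk : 2 ≤ k) (h : ContDiff ℝ (k : ℕ) f) :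
    ContDiff ℝ 2 f := h.of_le (by exact_mod_cast Nat.cast_le.2 hk)

theorem da_of_c1 {m : ℕ} (h : ContDiff ℝ ((m+1 : ℕ) : ℕ) f) : DifferentiableAt ℝ f x :=
  (h.differentiable (by simp)) x

theorem pd2_eq_fderiv2 (hf : ContDiff ℝ 2 f) (x : Fin n → ℝ) :
    pd2 i j f x = fderiv ℝ (fderiv ℝ f) x (Pi.single i 1) (Pi.single j 1) := by
  have hd : DifferentiableAt ℝ (fderiv ℝ f) x :=
    (hf.fderiv_right (m := 1) (by norm_num)).differentiable one_ne_zero x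
  have : pd j f = fun y => (fderiv ℝ f y) (Pi.single j 1) := rfl
  rw [pd2, pd, this, fderiv_clm_apply hd (differentiableAt_const _)]
  simp

theorem pd_comm (hf : ContDiff ℝ 2 f) (i j : Fin n) (x : Fin n → ℝ) :
    pd i (pd j f) x = pd j (pd i f) x := by
  have h1 : ∀ y, HasFDerivAt f (fderiv ℝ f y) y := fun y =>
    (hf.differentiable (by norm_num) y).hasFDerivAt
  have hd : DifferentiableAt ℝ (fderiv ℝ f) x :=
    (hf.fderiv_right (m := 1) (by norm_num)).differentiable one_ne_zero x
  have hs := second_derivative_symmetric h1 hd.hasFDerivAt (Pi.single i 1) (Pi.single j 1)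
  have e1 := pd2_eq_fderiv2 (i := i) (j := j) hf x
  have e2 := pd2_eq_fderiv2 (i := j) (j := i) hf x
  rw [pd2] at e1 e2
  rw [e1, e2, hs]

theorem line_hasDerivAt (hf : Differentiable ℝ f) (x v : Fin n → ℝ) (t : ℝ) :
    HasDerivAt (fun s : ℝ => f (x + s • v)) (fderiv ℝ f (x + t • v) v) t := by
  have hline : HasDerivAt (fun s : ℝ => x + s • v) v t := by
    simpa using ((hasDerivAt_id t).smul_const v).const_add x
  exact ((hf (x + t • v)).hasFDerivAt.comp_hasDerivAt t hline)

theorem line_deriv2 (hf : ContDiff ℝ 2 f) (x v : Fin n → ℝ) :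
    HasDerivAt (fun t : ℝ => fderiv ℝ f (x + t • v) v)
      (fderiv ℝ (fderiv ℝ f) x v v) 0 := by
  have hd : Differentiable ℝ (fderiv ℝ f) :=
    (hf.fderiv_right (m := 1) (by norm_num)).differentiable one_ne_zero
  have hline : HasDerivAt (fun s : ℝ => x + s • v) v 0 := by
    simpa using ((hasDerivAt_id (0:ℝ)).smul_const v).const_add x
  have h1 : HasDerivAt (fun t : ℝ => fderiv ℝ f (x + t • v))
      (fderiv ℝ (fderiv ℝ f) x v) 0 := by
    have := (hd (x + (0:ℝ) • v)).hasFDerivAt.comp_hasDerivAt 0 hline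
    simp only [zero_smul, add_zero] at this
    exact this
  have h2 := ((ContinuousLinearMap.apply ℝ ℝ v).hasFDerivAt.comp_hasDerivAt 0 h1)
  exact h2

theorem deriv2_nonpos_of_max {g g' : ℝ → ℝ} {d : ℝ}
    (hmax : ∀ t, g t ≤ g 0) (hg : ∀ t, HasDerivAt g (g' t) t)
    (hd : HasDerivAt g' d 0) : d ≤ 0 := by
  by_contra hpos
  push_neg at hpos
  have hg0 : g' 0 = 0 := by
    have hlm : IsLocalMax g 0 := (Filter.Eventually.of_forall hmax)
    have := hlm.deriv_eq_zero
    rwa [(hg 0).deriv] at this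
  have hslope := hasDerivAt_iff_tendsto_slope.1 hd
  have hev : ∀ᶠ t in nhdsWithin 0 {(0:ℝ)}ᶜ, 0 < slope g' 0 t :=
    hslope.eventually (eventually_gt_nhds hpos)
  rw [eventually_nhdsWithin_iff, Metric.eventually_nhds_iff] at hev
  obtain ⟨δ, hδ, hball⟩ := hev
  have hpos' : ∀ t ∈ Set.Ioo (0:ℝ) δ, 0 < g' t := by
    intro t ht
    have h1 : dist t (0:ℝ) < δ := by
      rw [Real.dist_eq]; rw [abs_sub_lt_iff]; constructor <;> linarith [ht.1, ht.2]
    have := hball h1 (by simp; linarith [ht.1] : t ∈ ({(0:ℝ)}ᶜ : Set ℝ))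
    rw [slope_def_field, hg0] at this
    simp at this
    have := mul_pos this ht.1
    calc (0:ℝ) < g' t / t * t := this
    _ = g' t := div_mul_cancel₀ _ (ne_of_gt ht.1)
  have hmono : StrictMonoOn g (Set.Icc 0 δ) := by
    apply strictMonoOn_of_deriv_pos (convex_Icc 0 δ)
    · exact Continuous.continuousOn (by
        have : Differentiable ℝ g := fun t => (hg t).differentiableAt
        exact this.continuous)
    · intro t ht
      rw [interior_Icc] at ht
      rw [(hg t).deriv]
      exact hpos' t ht
  have h01 : (0:ℝ) ∈ Set.Icc (0:ℝ) δ := by constructor <;> linarith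
  have h02 : δ/2 ∈ Set.Icc (0:ℝ) δ := by constructor <;> linarith
  have := hmono h01 h02 (by linarith)
  linarith [hmax (δ/2)]

theorem vec_decomp (v : Fin n → ℝ) : v = ∑ i, v i • (Pi.single i (1:ℝ) : Fin n → ℝ) := by
  funext j
  simp [Finset.sum_apply, Pi.single_apply]

theorem bilin_expand (D : (Fin n → ℝ) →L[ℝ] (Fin n → ℝ) →L[ℝ] ℝ) (v : Fin n → ℝ) :
    D v v = ∑ i, ∑ j, v i * v j * D (Pi.single i 1) (Pi.single j 1) := by
  have h1 : ∀ w, D v w = ∑ i, v i * D (Pi.single i 1) w := by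
    intro w
    conv_lhs => rw [vec_decomp v]
    rw [map_sum, ContinuousLinearMap.sum_apply]
    refine Finset.sum_congr rfl fun i _ => ?_
    rw [_root_.map_smul, ContinuousLinearMap.smul_apply, smul_eq_mul]
  have h2 : ∀ i, D (Pi.single i 1) v = ∑ j, v j * D (Pi.single i 1) (Pi.single j 1) := by
    intro i
    conv_lhs => rw [vec_decomp v]
    rw [map_sum]
    refine Finset.sum_congr rfl fun j _ => ?_
    rw [_root_.map_smul, smul_eq_mul]
  rw [h1 v]
  refine Finset.sum_congr rfl fun i _ => ?_
  rw [h2 i, Finset.mul_sum]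
  refine Finset.sum_congr rfl fun j _ => ?_
  ring

theorem hess_nonpos (hf : ContDiff ℝ 2 f) (x₀ : Fin n → ℝ) (hmax : ∀ y, f y ≤ f x₀)
    (v : Fin n → ℝ) : ∑ i, ∑ j, v i * v j * pd2 i j f x₀ ≤ 0 := by
  have hdiff : Differentiable ℝ f := hf.differentiable (by norm_num)
  set g' : ℝ → ℝ := fun t => fderiv ℝ f (x₀ + t • v) v with hg'
  have hg : ∀ t, HasDerivAt (fun s : ℝ => f (x₀ + s • v)) (g' t) t :=
    fun t => line_hasDerivAt hdiff x₀ v t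
  have hd : HasDerivAt g' (fderiv ℝ (fderiv ℝ f) x₀ v v) 0 := line_deriv2 hf x₀ v
  have hm : ∀ t : ℝ, f (x₀ + t • v) ≤ f (x₀ + (0:ℝ) • v) := by
    intro t; simpa using hmax (x₀ + t • v)
  have := deriv2_nonpos_of_max hm hg hd
  calc ∑ i, ∑ j, v i * v j * pd2 i j f x₀
      = ∑ i, ∑ j, v i * v j * fderiv ℝ (fderiv ℝ f) x₀ (Pi.single i 1) (Pi.single j 1) := by
        refine Finset.sum_congr rfl fun i _ => Finset.sum_congr rfl fun j _ => ?_
        rw [pd2_eq_fderiv2 hf]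
    _ = fderiv ℝ (fderiv ℝ f) x₀ v v := (bilin_expand _ v).symm
    _ ≤ 0 := this

theorem pd_eq_zero_of_max (hf : Differentiable ℝ f) (x₀ : Fin n → ℝ)
    (hmax : ∀ y, f y ≤ f x₀) (i : Fin n) : pd i f x₀ = 0 := by
  have hg : ∀ t, HasDerivAt (fun s : ℝ => f (x₀ + s • (Pi.single i 1 : Fin n → ℝ)))
      (fderiv ℝ f (x₀ + t • (Pi.single i 1 : Fin n → ℝ)) (Pi.single i 1)) t :=
    fun t => line_hasDerivAt hf x₀ _ t
  have hlm : IsLocalMax (fun s : ℝ => f (x₀ + s • (Pi.single i 1 : Fin n → ℝ))) 0 :=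
    Filter.Eventually.of_forall (fun t => by simpa using hmax _)
  have h0 := hlm.deriv_eq_zero
  rw [(hg 0).deriv] at h0
  simpa [pd] using h0

theorem pd4_comm {φ : (Fin n → ℝ) → ℝ} (hφ : ContDiff ℝ 4 φ) (i j r s : Fin n) (x : Fin n → ℝ) :
    pd i (pd j (pd r (pd s φ))) x = pd r (pd s (pd i (pd j φ))) x := by
  have hφ4 : ContDiff ℝ ((3:ℕ)+1 : ℕ) φ := by exact_mod_cast hφ
  have c3 : ∀ a : Fin n, ContDiff ℝ ((2:ℕ)+1 : ℕ) (pd a φ) := fun a => contDiff_pd hφ4 a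
  have c2 : ∀ a b : Fin n, ContDiff ℝ (2:ℕ) (pd a (pd b φ)) := fun a b => contDiff_pd (c3 b) a
  have hφ2 : ContDiff ℝ 2 φ := cast2 (k := 4) (by norm_num) (by exact_mod_cast hφ)
  have h1 : pd j (pd r (pd s φ)) = pd r (pd j (pd s φ)) :=
    funext (pd_comm (cast2 (by norm_num) (c3 s)) j r)
  rw [h1, pd_comm (cast2 le_rfl (c2 j s)) i r x]
  have h2 : pd i (pd j (pd s φ)) = pd j (pd i (pd s φ)) :=
    funext (pd_comm (cast2 (by norm_num) (c3 s)) i j)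
  rw [h2]
  have h3 : pd i (pd s φ) = pd s (pd i φ) := funext (pd_comm hφ2 i s)
  rw [h3]
  have h4 : pd j (pd s (pd i φ)) = pd s (pd j (pd i φ)) :=
    funext (pd_comm (cast2 (by norm_num) (c3 i)) j s)
  rw [h4]
  have h5 : pd j (pd i φ) = pd i (pd j φ) := funext (pd_comm hφ2 j i)
  rw [h5]

theorem pd2_mul (hf : ContDiff ℝ (2:ℕ) f) (hg : ContDiff ℝ (2:ℕ) g) (k : Fin n) (x : Fin n → ℝ) :
    pd2 k k (fun y => f y * g y) x
      = f x * pd2 k k g x + 2 * pd k f x * pd k g x + g x * pd2 k k f x := by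
  have hdf : ∀ y, DifferentiableAt ℝ f y := fun y => da_of_c1 (m := 1) hf
  have hdg : ∀ y, DifferentiableAt ℝ g y := fun y => da_of_c1 (m := 1) hg
  have h1 : pd k (fun y => f y * g y) = fun y => f y * pd k g y + g y * pd k f y :=
    funext fun y => pd_mul (hdf y) (hdg y)
  have hdpf : DifferentiableAt ℝ (pd k f) x := da_of_c1 (m := 0) (contDiff_pd (m := 1) hf k)
  have hdpg : DifferentiableAt ℝ (pd k g) x := da_of_c1 (m := 0) (contDiff_pd (m := 1) hg k)
  rw [pd2, h1, pd_add ((hdf x).fun_mul hdpg) ((hdg x).fun_mul hdpf),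
    pd_mul (hdf x) hdpg, pd_mul (hdg x) hdpf]
  show f x * pd2 k k g x + pd k g x * pd k f x + (g x * pd2 k k f x + pd k f x * pd k g x) = _
  ring

theorem pd2_sq (hf : ContDiff ℝ (2:ℕ) f) (k : Fin n) (x : Fin n → ℝ) :
    pd2 k k (fun y => (f y) ^ 2) x = 2 * f x * pd2 k k f x + 2 * (pd k f x) ^ 2 := by
  have : (fun y => (f y) ^ 2) = fun y => f y * f y := by funext y; ring
  rw [this, pd2_mul hf hf]; ring

theorem pd2_sub (hf : DifferentiableAt ℝ f x) (hg : DifferentiableAt ℝ g x)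
    (hf' : ∀ y, pd i (fun z => f z - g z) y = pd i f y - pd i g y)
    (hdf : DifferentiableAt ℝ (pd i f) x) (hdg : DifferentiableAt ℝ (pd i g) x) :
    pd2 i i (fun y => f y - g y) x = pd2 i i f x - pd2 i i g x := by
  rw [pd2, funext hf', pd_sub hdf hdg]; rfl

end helpers


/-- `u = Δφ + 2` as a function. -/
noncomputable def uu (φ : (Fin 6 → ℝ) → ℝ) : (Fin 6 → ℝ) → ℝ := fun x => lap φ x + 2

section six

variable {φ : (Fin 6 → ℝ) → ℝ} {x : Fin 6 → ℝ} {k : Fin 6}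

theorem da_of {f : (Fin 6 → ℝ) → ℝ} {k : ℕ} (hf : ContDiff ℝ (k : ℕ) f) (hk : 1 ≤ k) :
    DifferentiableAt ℝ f x :=
  (hf.differentiable (by exact_mod_cast Nat.one_le_iff_ne_zero.mp hk)) x

theorem contDiff_pd' {f : (Fin 6 → ℝ) → ℝ} {m k : ℕ} (hf : ContDiff ℝ (k : ℕ) f)
    (hmk : m + 1 ≤ k) (i : Fin 6) : ContDiff ℝ (m : ℕ) (pd i f) :=
  contDiff_pd (hf.of_le (by exact_mod_cast Nat.cast_le.2 hmk)) i

theorem c3pd (hφ : ContDiff ℝ 4 φ) (b : Fin 6) : ContDiff ℝ (3 : ℕ) (pd b φ) :=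
  contDiff_pd' (k := 4) (by exact_mod_cast hφ) (by norm_num) b

theorem c2pd2 (hφ : ContDiff ℝ 4 φ) (a b : Fin 6) : ContDiff ℝ (2 : ℕ) (pd2 a b φ) :=
  contDiff_pd' (c3pd hφ b) (by norm_num) a

theorem c1pd3 (hφ : ContDiff ℝ 4 φ) (c a b : Fin 6) : ContDiff ℝ (1 : ℕ) (pd c (pd2 a b φ)) :=
  contDiff_pd' (c2pd2 hφ a b) (by norm_num) c

theorem dapd2 (hφ : ContDiff ℝ 4 φ) (a b : Fin 6) : DifferentiableAt ℝ (pd2 a b φ) x :=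
  da_of (c2pd2 hφ a b) (by norm_num)

theorem dapd3 (hφ : ContDiff ℝ 4 φ) (c a b : Fin 6) : DifferentiableAt ℝ (pd c (pd2 a b φ)) x :=
  da_of (c1pd3 hφ c a b) le_rfl

theorem c2uu (hφ : ContDiff ℝ 4 φ) : ContDiff ℝ (2 : ℕ) (uu φ) := by
  have h : uu φ = fun y => (∑ j, pd2 j j φ y) + 2 := rfl
  rw [h]
  exact (ContDiff.sum fun j _ => c2pd2 hφ j j).add contDiff_const

theorem c2A6 (hφ : ContDiff ℝ 4 φ) : ContDiff ℝ (2 : ℕ) (A6 φ) := by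
  have h : A6 φ = fun y => pd2 0 0 φ y + pd2 1 1 φ y + pd2 2 2 φ y + pd2 3 3 φ y + 1 := rfl
  rw [h]
  exact ((((c2pd2 hφ 0 0).add (c2pd2 hφ 1 1)).add (c2pd2 hφ 2 2)).add (c2pd2 hφ 3 3)).add
    contDiff_const

theorem c2B6 (hφ : ContDiff ℝ 4 φ) : ContDiff ℝ (2 : ℕ) (B6 φ) := by
  have h : B6 φ = fun y => pd2 4 4 φ y + pd2 5 5 φ y + 1 := rfl
  rw [h]
  exact ((c2pd2 hφ 4 4).add (c2pd2 hφ 5 5)).add contDiff_const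

theorem c2a₁6 (hφ : ContDiff ℝ 4 φ) : ContDiff ℝ (2 : ℕ) (a₁6 φ) :=
  (c2pd2 hφ 2 4).sub (c2pd2 hφ 1 5)
theorem c2a₂6 (hφ : ContDiff ℝ 4 φ) : ContDiff ℝ (2 : ℕ) (a₂6 φ) :=
  (c2pd2 hφ 3 4).sub (c2pd2 hφ 0 5)
theorem c2a₃6 (hφ : ContDiff ℝ 4 φ) : ContDiff ℝ (2 : ℕ) (a₃6 φ) :=
  (c2pd2 hφ 3 5).add (c2pd2 hφ 0 4)
theorem c2a₄6 (hφ : ContDiff ℝ 4 φ) : ContDiff ℝ (2 : ℕ) (a₄6 φ) :=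
  (c2pd2 hφ 2 5).add (c2pd2 hφ 1 4)

theorem pd_A6 (hφ : ContDiff ℝ 4 φ) (k : Fin 6) (x : Fin 6 → ℝ) :
    pd k (A6 φ) x = pd k (pd2 0 0 φ) x + pd k (pd2 1 1 φ) x
      + pd k (pd2 2 2 φ) x + pd k (pd2 3 3 φ) x := by
  have d : ∀ a b : Fin 6, DifferentiableAt ℝ (pd2 a b φ) x := fun a b => dapd2 hφ a b
  have h : A6 φ = fun y => (pd2 0 0 φ y + pd2 1 1 φ y + pd2 2 2 φ y + pd2 3 3 φ y) + 1 := rfl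
  rw [h, pd_add_const, pd_add (((d 0 0).fun_add (d 1 1)).fun_add (d 2 2)) (d 3 3),
    pd_add ((d 0 0).fun_add (d 1 1)) (d 2 2), pd_add (d 0 0) (d 1 1)]

theorem pd_B6 (hφ : ContDiff ℝ 4 φ) (k : Fin 6) (x : Fin 6 → ℝ) :
    pd k (B6 φ) x = pd k (pd2 4 4 φ) x + pd k (pd2 5 5 φ) x := by
  have d : ∀ a b : Fin 6, DifferentiableAt ℝ (pd2 a b φ) x := fun a b => dapd2 hφ a b
  have h : B6 φ = fun y => (pd2 4 4 φ y + pd2 5 5 φ y) + 1 := rfl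
  rw [h, pd_add_const, pd_add (d 4 4) (d 5 5)]

theorem pd_a₁6 (hφ : ContDiff ℝ 4 φ) (k : Fin 6) (x : Fin 6 → ℝ) :
    pd k (a₁6 φ) x = pd k (pd2 2 4 φ) x - pd k (pd2 1 5 φ) x :=
  pd_sub (dapd2 hφ 2 4) (dapd2 hφ 1 5)

theorem pd_a₂6 (hφ : ContDiff ℝ 4 φ) (k : Fin 6) (x : Fin 6 → ℝ) :
    pd k (a₂6 φ) x = pd k (pd2 3 4 φ) x - pd k (pd2 0 5 φ) x :=
  pd_sub (dapd2 hφ 3 4) (dapd2 hφ 0 5)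

theorem pd_a₃6 (hφ : ContDiff ℝ 4 φ) (k : Fin 6) (x : Fin 6 → ℝ) :
    pd k (a₃6 φ) x = pd k (pd2 3 5 φ) x + pd k (pd2 0 4 φ) x :=
  pd_add (dapd2 hφ 3 5) (dapd2 hφ 0 4)

theorem pd_a₄6 (hφ : ContDiff ℝ 4 φ) (k : Fin 6) (x : Fin 6 → ℝ) :
    pd k (a₄6 φ) x = pd k (pd2 2 5 φ) x + pd k (pd2 1 4 φ) x :=
  pd_add (dapd2 hφ 2 5) (dapd2 hφ 1 4)

theorem pd_uu (hφ : ContDiff ℝ 4 φ) (k : Fin 6) (x : Fin 6 → ℝ) :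
    pd k (uu φ) x = ∑ j, pd k (pd2 j j φ) x := by
  have h : uu φ = fun y => (∑ j : Fin 6, pd2 j j φ y) + 2 := rfl
  rw [h, pd_add_const, pd_sum (fun j _ => dapd2 hφ j j)]

theorem sum_lap_pd2 (hφ : ContDiff ℝ 4 φ) (c d : Fin 6) (x : Fin 6 → ℝ) :
    ∑ k, pd2 k k (pd2 c d φ) x = pd2 c d (uu φ) x := by
  have h1 : pd d (uu φ) = fun y => ∑ k, pd d (pd2 k k φ) y := funext fun y => pd_uu hφ d y
  have h2 : pd2 c d (uu φ) x = ∑ k, pd c (pd d (pd2 k k φ)) x := by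
    rw [pd2, h1, pd_sum (fun j _ => dapd3 hφ d j j)]
  rw [h2]
  exact Finset.sum_congr rfl fun j _ => pd4_comm hφ j j c d x

theorem sum_lap_A6 (hφ : ContDiff ℝ 4 φ) (x : Fin 6 → ℝ) :
    ∑ k, pd2 k k (A6 φ) x = pd2 0 0 (uu φ) x + pd2 1 1 (uu φ) x
      + pd2 2 2 (uu φ) x + pd2 3 3 (uu φ) x := by
  have h1 : ∀ k : Fin 6, pd2 k k (A6 φ) x = pd2 k k (pd2 0 0 φ) x + pd2 k k (pd2 1 1 φ) x
      + pd2 k k (pd2 2 2 φ) x + pd2 k k (pd2 3 3 φ) x := by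
    intro k
    have e1 : pd k (A6 φ) = fun y => pd k (pd2 0 0 φ) y + pd k (pd2 1 1 φ) y
        + pd k (pd2 2 2 φ) y + pd k (pd2 3 3 φ) y := funext fun y => pd_A6 hφ k y
    have d : ∀ a b : Fin 6, DifferentiableAt ℝ (pd k (pd2 a b φ)) x := fun a b => dapd3 hφ k a b
    rw [pd2, e1, pd_add (((d 0 0).fun_add (d 1 1)).fun_add (d 2 2)) (d 3 3),
      pd_add ((d 0 0).fun_add (d 1 1)) (d 2 2), pd_add (d 0 0) (d 1 1)]
    rfl
  rw [Finset.sum_congr rfl (fun k _ => h1 k), Finset.sum_add_distrib, Finset.sum_add_distrib,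
    Finset.sum_add_distrib, sum_lap_pd2 hφ, sum_lap_pd2 hφ, sum_lap_pd2 hφ, sum_lap_pd2 hφ]

theorem sum_lap_B6 (hφ : ContDiff ℝ 4 φ) (x : Fin 6 → ℝ) :
    ∑ k, pd2 k k (B6 φ) x = pd2 4 4 (uu φ) x + pd2 5 5 (uu φ) x := by
  have h1 : ∀ k : Fin 6, pd2 k k (B6 φ) x = pd2 k k (pd2 4 4 φ) x + pd2 k k (pd2 5 5 φ) x := by
    intro k
    have e1 : pd k (B6 φ) = fun y => pd k (pd2 4 4 φ) y + pd k (pd2 5 5 φ) y :=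
      funext fun y => pd_B6 hφ k y
    have d : ∀ a b : Fin 6, DifferentiableAt ℝ (pd k (pd2 a b φ)) x := fun a b => dapd3 hφ k a b
    rw [pd2, e1, pd_add (d 4 4) (d 5 5)]
    rfl
  rw [Finset.sum_congr rfl (fun k _ => h1 k), Finset.sum_add_distrib,
    sum_lap_pd2 hφ, sum_lap_pd2 hφ]

theorem sum_lap_pair_sub (hφ : ContDiff ℝ 4 φ) (a b c d : Fin 6) (x : Fin 6 → ℝ) :
    ∑ k, pd2 k k (fun y => pd2 a b φ y - pd2 c d φ y) x
      = pd2 a b (uu φ) x - pd2 c d (uu φ) x := by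
  have h1 : ∀ k : Fin 6, pd2 k k (fun y => pd2 a b φ y - pd2 c d φ y) x
      = pd2 k k (pd2 a b φ) x - pd2 k k (pd2 c d φ) x := by
    intro k
    have e1 : pd k (fun y => pd2 a b φ y - pd2 c d φ y)
        = fun y => pd k (pd2 a b φ) y - pd k (pd2 c d φ) y :=
      funext fun y => pd_sub (dapd2 hφ a b) (dapd2 hφ c d)
    rw [pd2, e1, pd_sub (dapd3 hφ k a b) (dapd3 hφ k c d)]
    rfl
  rw [Finset.sum_congr rfl (fun k _ => h1 k), Finset.sum_sub_distrib,
    sum_lap_pd2 hφ, sum_lap_pd2 hφ]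

theorem sum_lap_pair_add (hφ : ContDiff ℝ 4 φ) (a b c d : Fin 6) (x : Fin 6 → ℝ) :
    ∑ k, pd2 k k (fun y => pd2 a b φ y + pd2 c d φ y) x
      = pd2 a b (uu φ) x + pd2 c d (uu φ) x := by
  have h1 : ∀ k : Fin 6, pd2 k k (fun y => pd2 a b φ y + pd2 c d φ y) x
      = pd2 k k (pd2 a b φ) x + pd2 k k (pd2 c d φ) x := by
    intro k
    have e1 : pd k (fun y => pd2 a b φ y + pd2 c d φ y)
        = fun y => pd k (pd2 a b φ) y + pd k (pd2 c d φ) y :=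
      funext fun y => pd_add (dapd2 hφ a b) (dapd2 hφ c d)
    rw [pd2, e1, pd_add (dapd3 hφ k a b) (dapd3 hφ k c d)]
    rfl
  rw [Finset.sum_congr rfl (fun k _ => h1 k), Finset.sum_add_distrib,
    sum_lap_pd2 hφ, sum_lap_pd2 hφ]

theorem pd2_sub' {f g : (Fin 6 → ℝ) → ℝ} (hf : ContDiff ℝ (2:ℕ) f) (hg : ContDiff ℝ (2:ℕ) g)
    (k : Fin 6) (x : Fin 6 → ℝ) :
    pd2 k k (fun y => f y - g y) x = pd2 k k f x - pd2 k k g x :=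
  pd2_sub (da_of hf (by norm_num)) (da_of hg (by norm_num))
    (fun y => pd_sub (da_of hf (by norm_num)) (da_of hg (by norm_num)))
    (da_of (contDiff_pd' hf (by norm_num) k) le_rfl)
    (da_of (contDiff_pd' hg (by norm_num) k) le_rfl)

theorem pd2_comb {A B c1 c2 c3 c4 : (Fin 6 → ℝ) → ℝ}
    (hA : ContDiff ℝ (2:ℕ) A) (hB : ContDiff ℝ (2:ℕ) B)
    (h1 : ContDiff ℝ (2:ℕ) c1) (h2 : ContDiff ℝ (2:ℕ) c2)
    (h3 : ContDiff ℝ (2:ℕ) c3) (h4 : ContDiff ℝ (2:ℕ) c4) (k : Fin 6) (x : Fin 6 → ℝ) :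
    pd2 k k (fun y => A y * B y - c1 y ^ 2 - c2 y ^ 2 - c3 y ^ 2 - c4 y ^ 2) x
      = A x * pd2 k k B x + 2 * pd k A x * pd k B x + B x * pd2 k k A x
        - (2 * c1 x * pd2 k k c1 x + 2 * (pd k c1 x) ^ 2)
        - (2 * c2 x * pd2 k k c2 x + 2 * (pd k c2 x) ^ 2)
        - (2 * c3 x * pd2 k k c3 x + 2 * (pd k c3 x) ^ 2)
        - (2 * c4 x * pd2 k k c4 x + 2 * (pd k c4 x) ^ 2) := by
  have cAB : ContDiff ℝ (2:ℕ) (fun y => A y * B y) := hA.mul hB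
  have s1 : ContDiff ℝ (2:ℕ) (fun y => A y * B y - c1 y ^ 2) := cAB.sub (h1.pow 2)
  have s2 : ContDiff ℝ (2:ℕ) (fun y => A y * B y - c1 y ^ 2 - c2 y ^ 2) := s1.sub (h2.pow 2)
  have s3 : ContDiff ℝ (2:ℕ) (fun y => A y * B y - c1 y ^ 2 - c2 y ^ 2 - c3 y ^ 2) :=
    s2.sub (h3.pow 2)
  rw [pd2_sub' s3 (h4.pow 2), pd2_sub' s2 (h3.pow 2), pd2_sub' s1 (h2.pow 2),
    pd2_sub' cAB (h1.pow 2), pd2_mul hA hB, pd2_sq h1, pd2_sq h2, pd2_sq h3, pd2_sq h4]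

end six



theorem cons_val_five {α : Type*} {m : ℕ} (x : α) (u : Fin (m + 5) → α) :
    Matrix.vecCons x u 5 = u 4 := rfl

theorem cons_val_4 {α : Type*} {m : ℕ} (x : α) (u : Fin (m + 4) → α) :
    Matrix.vecCons x u 4 = u 3 := rfl

noncomputable def Qmat (Av Bv a1 a2 a3 a4 : ℝ) : Matrix (Fin 6) (Fin 6) ℝ :=
 !![Bv, 0, 0, 0, -a3, a2;
    0, Bv, 0, 0, -a4, a1;
    0, 0, Bv, 0, -a1, -a4;
    0, 0, 0, Bv, -a2, -a3;
    -a3, -a4, -a1, -a2, Av, 0;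
    a2, a1, -a4, -a3, 0, Av]

theorem Qmat_expand (Av Bv a1 a2 a3 a4 : ℝ) (M : Fin 6 → Fin 6 → ℝ) :
    ∑ r, ∑ s, Qmat Av Bv a1 a2 a3 a4 r s * M r s
      = Bv * (M 0 0 + M 1 1 + M 2 2 + M 3 3) + Av * (M 4 4 + M 5 5)
        - a1 * (M 2 4 + M 4 2) + a1 * (M 1 5 + M 5 1)
        - a2 * (M 3 4 + M 4 3) + a2 * (M 0 5 + M 5 0)
        - a3 * (M 3 5 + M 5 3) - a3 * (M 0 4 + M 4 0)
        - a4 * (M 2 5 + M 5 2) - a4 * (M 1 4 + M 4 1) := by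
  simp [Qmat, Fin.sum_univ_six, cons_val_five, cons_val_4]
  ring

theorem Qmat_psd (Av Bv a1 a2 a3 a4 : ℝ)
    (h : ∀ v : Fin 6 → ℝ,
      0 ≤ Bv * ((v 0)^2 + (v 1)^2 + (v 2)^2 + (v 3)^2) + Av * ((v 4)^2 + (v 5)^2)
          - 2*a1*(v 2 * v 4 - v 1 * v 5) - 2*a2*(v 3 * v 4 - v 0 * v 5)
          - 2*a3*(v 3 * v 5 + v 0 * v 4) - 2*a4*(v 2 * v 5 + v 1 * v 4)) :
    (Qmat Av Bv a1 a2 a3 a4).PosSemidef := by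
  refine Matrix.PosSemidef.of_dotProduct_mulVec_nonneg ?_ ?_
  · ext i j
    fin_cases i <;> fin_cases j <;> simp [Qmat, Matrix.conjTranspose_apply, cons_val_five, cons_val_4]
  · intro v
    have hv := h v
    simp only [dotProduct, Matrix.mulVec, Fin.sum_univ_six, Qmat, star_trivial]
    simp [Matrix.cons_val_zero, Matrix.cons_val_one, Matrix.head_cons, cons_val_five, cons_val_4]
    nlinarith [hv]

theorem psd_trace {Q : Matrix (Fin 6) (Fin 6) ℝ} (hQ : Q.PosSemidef) (H : Fin 6 → Fin 6 → ℝ)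
    (hH : ∀ v : Fin 6 → ℝ, ∑ i, ∑ j, v i * v j * H i j ≤ 0) :
    ∑ r, ∑ s, Q r s * H r s ≤ 0 := by
  obtain ⟨m, C, hC⟩ := Matrix.posSemidef_iff_eq_sum_vecMulVec.mp hQ
  have hQrs : ∀ r s, Q r s = ∑ j, C j r * C j s := by
    intro r s
    rw [hC, Matrix.sum_apply]
    refine Finset.sum_congr rfl fun j _ => ?_
    simp [Matrix.vecMulVec_apply]
  calc ∑ r, ∑ s, Q r s * H r s
      = ∑ r, ∑ s, ∑ j, C j r * C j s * H r s := by
        refine Finset.sum_congr rfl fun r _ => Finset.sum_congr rfl fun s _ => ?_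
        rw [hQrs r s, Finset.sum_mul]
    _ = ∑ r, ∑ j, ∑ s, C j r * C j s * H r s :=
        Finset.sum_congr rfl fun r _ => Finset.sum_comm
    _ = ∑ j, ∑ r, ∑ s, C j r * C j s * H r s := Finset.sum_comm
    _ ≤ 0 := Finset.sum_nonpos fun j _ => hH (fun r => C j r)


set_option maxHeartbeats 2000000 in
/-- Conditional key estimate at a maximum point of `(Δφ+2)e^{−μφ}` for solutions of
equation (†) on `T⁶`. -/
theorem key_estimate_at_max_point_T6
    (F φ : (Fin 6 → ℝ) → ℝ) (hF : ContDiff ℝ 2 F) (hFper : PeriodicPi F)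
    (hφ : ContDiff ℝ 4 φ) (hφper : PeriodicPi φ) (heq : EqDagger F φ)
    (hpos : ∀ x : Fin 6 → ℝ, 0 < lap φ x + 2)
    (μ : ℝ)
    (hμ : μ = 1 / ((⨆ x : Fin 6 → ℝ, (lap φ x + 2)) *
      (1 + ⨆ x : Fin 6 → ℝ, eucNorm (fun i => pd i φ x))))
    (p₀ : Fin 6 → ℝ)
    (hmax : ∀ x : Fin 6 → ℝ,
      (lap φ x + 2) * Real.exp (-μ * φ x) ≤ (lap φ p₀ + 2) * Real.exp (-μ * φ p₀))
    (hi : ∀ ξ : Fin 6 → ℝ,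
      0 ≤ B6 φ p₀ * ((ξ 0) ^ 2 + (ξ 1) ^ 2 + (ξ 2) ^ 2 + (ξ 3) ^ 2)
          + A6 φ p₀ * ((ξ 4) ^ 2 + (ξ 5) ^ 2)
          - 2 * a₁6 φ p₀ * (ξ 2 * ξ 4 - ξ 1 * ξ 5)
          - 2 * a₂6 φ p₀ * (ξ 3 * ξ 4 - ξ 0 * ξ 5)
          - 2 * a₃6 φ p₀ * (ξ 3 * ξ 5 + ξ 0 * ξ 4)
          - 2 * a₄6 φ p₀ * (ξ 2 * ξ 5 + ξ 1 * ξ 4))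
    (hii : ∀ ξ : Fin 6 → ℝ,
      2 * |a₁6 φ p₀| * (ξ 2 * ξ 4 + ξ 1 * ξ 5)
          + 2 * |a₂6 φ p₀| * (ξ 3 * ξ 4 + ξ 0 * ξ 5)
          + 2 * |a₃6 φ p₀| * (ξ 3 * ξ 5 + ξ 0 * ξ 4)
          + 2 * |a₄6 φ p₀| * (ξ 2 * ξ 5 + ξ 1 * ξ 4)
        ≤ B6 φ p₀ * ((ξ 0) ^ 2 + (ξ 1) ^ 2 + (ξ 2) ^ 2 + (ξ 3) ^ 2)
          + A6 φ p₀ * ((ξ 4) ^ 2 + (ξ 5) ^ 2)) :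
    μ * (lap φ p₀ + 2) ^ 2
      ≤ -(lap (fun x => Real.exp (F x)) p₀)
        + 2 * μ * (lap φ p₀ + 2) * Real.exp (F p₀)
        + 3 * μ ^ 2 * (lap φ p₀ + 2) ^ 2 * (∑ i, (pd i φ p₀) ^ 2) := by
  -- basic smoothness facts
  have hφ4' : ContDiff ℝ ((4:ℕ) : ℕ) φ := by exact_mod_cast hφ
  have hφ2' : ContDiff ℝ ((2:ℕ) : ℕ) φ :=
    hφ4'.of_le (by exact_mod_cast Nat.cast_le.2 (by norm_num : (2:ℕ) ≤ 4))
  have hE2 : ContDiff ℝ ((2:ℕ) : ℕ) (fun y => Real.exp (-μ * φ y)) :=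
    (Real.contDiff_exp.of_le le_top).comp (contDiff_const.mul hφ2')
  have c2hh : ContDiff ℝ ((2:ℕ) : ℕ) (fun x => uu φ x * Real.exp (-μ * φ x)) :=
    (c2uu hφ).mul hE2
  have hu_pos : 0 < uu φ p₀ := hpos p₀
  have hEp : 0 < Real.exp (-μ * φ p₀) := Real.exp_pos _
  -- the function attaining an interior maximum at p₀
  have hmax' : ∀ y, (fun x => uu φ x * Real.exp (-μ * φ x)) y
      ≤ (fun x => uu φ x * Real.exp (-μ * φ x)) p₀ := fun y => hmax y
  -- pointwise differentiability facts
  have dU : ∀ x : Fin 6 → ℝ, DifferentiableAt ℝ (uu φ) x := fun x => da_of (c2uu hφ) (by norm_num)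
  have dE : ∀ x : Fin 6 → ℝ, DifferentiableAt ℝ (fun y => Real.exp (-μ * φ y)) x :=
    fun x => da_of hE2 (by norm_num)
  have dφ : ∀ x : Fin 6 → ℝ, DifferentiableAt ℝ φ x := fun x => da_of hφ4' (by norm_num)
  have dpφ : ∀ (s : Fin 6) (x : Fin 6 → ℝ), DifferentiableAt ℝ (pd s φ) x :=
    fun s x => da_of (c3pd hφ s) (by norm_num)
  have dpU : ∀ (s : Fin 6) (x : Fin 6 → ℝ), DifferentiableAt ℝ (pd s (uu φ)) x :=
    fun s x => da_of (contDiff_pd' (c2uu hφ) (by norm_num) s) le_rfl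
  -- first derivative of the product function
  have pdE : ∀ (r : Fin 6) (x : Fin 6 → ℝ),
      pd r (fun y => Real.exp (-μ * φ y)) x = Real.exp (-μ * φ x) * (-μ * pd r φ x) := by
    intro r x
    rw [pd_exp ((dφ x).const_mul (-μ)), pd_const_mul (-μ) (dφ x)]
  have pdhh : ∀ (s : Fin 6) (x : Fin 6 → ℝ),
      pd s (fun y => uu φ y * Real.exp (-μ * φ y)) x
        = pd s (uu φ) x * Real.exp (-μ * φ x)
          + uu φ x * (Real.exp (-μ * φ x) * (-μ * pd s φ x)) := by
    intro s x
    rw [pd_mul (dU x) (dE x), pdE s x]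
    ring
  -- vanishing gradient at p₀
  have dzero : ∀ k : Fin 6, pd k (fun x => uu φ x * Real.exp (-μ * φ x)) p₀ = 0 := by
    intro k
    exact pd_eq_zero_of_max
      ((cast2 le_rfl c2hh).differentiable (by norm_num)) p₀ hmax' k
  have hfo : ∀ k : Fin 6, pd k (uu φ) p₀ = μ * uu φ p₀ * pd k φ p₀ := by
    intro k
    have h0 := dzero k
    rw [pdhh k p₀] at h0
    have h1 : (pd k (uu φ) p₀) * Real.exp (-μ * φ p₀)
        = (μ * uu φ p₀ * pd k φ p₀) * Real.exp (-μ * φ p₀) := by linear_combination h0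
    exact mul_right_cancel₀ (ne_of_gt hEp) h1
  -- second derivatives of the product function at p₀
  have hstep2 : ∀ r s : Fin 6,
      pd2 r s (fun x => uu φ x * Real.exp (-μ * φ x)) p₀
        = (pd2 r s (uu φ) p₀ - μ^2 * uu φ p₀ * pd r φ p₀ * pd s φ p₀
            - μ * uu φ p₀ * pd2 r s φ p₀) * Real.exp (-μ * φ p₀) := by
    intro r s
    have e0 : pd s (fun y => uu φ y * Real.exp (-μ * φ y))
        = fun y => pd s (uu φ) y * Real.exp (-μ * φ y)
            + uu φ y * (Real.exp (-μ * φ y) * (-μ * pd s φ y)) := funext fun y => pdhh s y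
    have d1 : DifferentiableAt ℝ (fun y => pd s (uu φ) y * Real.exp (-μ * φ y)) p₀ :=
      (dpU s p₀).mul (dE p₀)
    have d2 : DifferentiableAt ℝ
        (fun y => Real.exp (-μ * φ y) * (-μ * pd s φ y)) p₀ :=
      (dE p₀).mul ((dpφ s p₀).const_mul (-μ))
    have d3 : DifferentiableAt ℝ
        (fun y => uu φ y * (Real.exp (-μ * φ y) * (-μ * pd s φ y))) p₀ := (dU p₀).mul d2
    show pd r (pd s (fun y => uu φ y * Real.exp (-μ * φ y))) p₀ = _
    rw [e0, pd_add d1 d3, pd_mul (dpU s p₀) (dE p₀), pd_mul (dU p₀) d2,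
      pd_mul (dE p₀) ((dpφ s p₀).const_mul (-μ)), pd_const_mul (-μ) (dpφ s p₀),
      pdE r p₀]
    have h4 : pd r (pd s (uu φ)) p₀ = pd2 r s (uu φ) p₀ := rfl
    have h5 : pd r (pd s φ) p₀ = pd2 r s φ p₀ := rfl
    rw [h4, h5, hfo r, hfo s]
    ring
  -- the Hessian quadratic form is nonpositive at p₀
  have hess : ∀ v : Fin 6 → ℝ,
      ∑ i, ∑ j, v i * v j * pd2 i j (fun x => uu φ x * Real.exp (-μ * φ x)) p₀ ≤ 0 :=
    hess_nonpos (cast2 le_rfl c2hh) p₀ hmax'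
  -- the PSD coefficient matrix
  have hQpsd : (Qmat (A6 φ p₀) (B6 φ p₀) (a₁6 φ p₀) (a₂6 φ p₀) (a₃6 φ p₀)
      (a₄6 φ p₀)).PosSemidef :=
    Qmat_psd _ _ _ _ _ _ hi
  have key := psd_trace hQpsd
    (fun r s => pd2 r s (fun x => uu φ x * Real.exp (-μ * φ x)) p₀) hess
  -- factor out the exponential
  have e1 : (∑ r, ∑ s, Qmat (A6 φ p₀) (B6 φ p₀) (a₁6 φ p₀) (a₂6 φ p₀) (a₃6 φ p₀) (a₄6 φ p₀) r s
        * pd2 r s (fun x => uu φ x * Real.exp (-μ * φ x)) p₀)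
      = (∑ r, ∑ s, Qmat (A6 φ p₀) (B6 φ p₀) (a₁6 φ p₀) (a₂6 φ p₀) (a₃6 φ p₀) (a₄6 φ p₀) r s
          * (pd2 r s (uu φ) p₀ - μ^2 * uu φ p₀ * pd r φ p₀ * pd s φ p₀
              - μ * uu φ p₀ * pd2 r s φ p₀)) * Real.exp (-μ * φ p₀) := by
    rw [Finset.sum_mul]
    refine Finset.sum_congr rfl fun r _ => ?_
    rw [Finset.sum_mul]
    refine Finset.sum_congr rfl fun s _ => ?_
    rw [hstep2 r s]
    ring
  rw [e1] at key
  have keyT : (∑ r, ∑ s, Qmat (A6 φ p₀) (B6 φ p₀) (a₁6 φ p₀) (a₂6 φ p₀) (a₃6 φ p₀) (a₄6 φ p₀) r s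
      * (pd2 r s (uu φ) p₀ - μ^2 * uu φ p₀ * pd r φ p₀ * pd s φ p₀
          - μ * uu φ p₀ * pd2 r s φ p₀)) ≤ 0 := by
    by_contra hc
    push_neg at hc
    nlinarith [mul_pos hc hEp]
  have expand := Qmat_expand (A6 φ p₀) (B6 φ p₀) (a₁6 φ p₀) (a₂6 φ p₀) (a₃6 φ p₀) (a₄6 φ p₀)
    (fun r s => pd2 r s (uu φ) p₀ - μ^2 * uu φ p₀ * pd r φ p₀ * pd s φ p₀
      - μ * uu φ p₀ * pd2 r s φ p₀)
  rw [expand] at keyT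
  -- symmetry of second derivatives
  have hUsym : ∀ r s : Fin 6, pd2 r s (uu φ) p₀ = pd2 s r (uu φ) p₀ :=
    fun r s => pd_comm (cast2 le_rfl (c2uu hφ)) r s p₀
  have hPsym : ∀ r s : Fin 6, pd2 r s φ p₀ = pd2 s r φ p₀ :=
    fun r s => pd_comm (cast2 le_rfl hφ2') r s p₀
  rw [hUsym 4 2, hUsym 5 1, hUsym 4 3, hUsym 5 0, hUsym 5 3, hUsym 4 0, hUsym 5 2, hUsym 4 1,
    hPsym 4 2, hPsym 5 1, hPsym 4 3, hPsym 5 0, hPsym 5 3, hPsym 4 0, hPsym 5 2, hPsym 4 1]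
    at keyT
  -- PDE: differentiate the equation twice and sum
  have hfeq : (fun x => Real.exp (F x))
      = fun y => A6 φ y * B6 φ y - a₁6 φ y ^ 2 - a₂6 φ y ^ 2 - a₃6 φ y ^ 2 - a₄6 φ y ^ 2 :=
    funext fun x => (heq x).symm
  have e0 : lap (fun x => Real.exp (F x)) p₀
      = ∑ k, pd2 k k (fun y => A6 φ y * B6 φ y - a₁6 φ y ^ 2 - a₂6 φ y ^ 2
          - a₃6 φ y ^ 2 - a₄6 φ y ^ 2) p₀ := by
    rw [hfeq]; rfl
  have sla1 : (∑ k, pd2 k k (a₁6 φ) p₀) = pd2 2 4 (uu φ) p₀ - pd2 1 5 (uu φ) p₀ :=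
    sum_lap_pair_sub hφ 2 4 1 5 p₀
  have sla2 : (∑ k, pd2 k k (a₂6 φ) p₀) = pd2 3 4 (uu φ) p₀ - pd2 0 5 (uu φ) p₀ :=
    sum_lap_pair_sub hφ 3 4 0 5 p₀
  have sla3 : (∑ k, pd2 k k (a₃6 φ) p₀) = pd2 3 5 (uu φ) p₀ + pd2 0 4 (uu φ) p₀ :=
    sum_lap_pair_add hφ 3 5 0 4 p₀
  have sla4 : (∑ k, pd2 k k (a₄6 φ) p₀) = pd2 2 5 (uu φ) p₀ + pd2 1 4 (uu φ) p₀ :=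
    sum_lap_pair_add hφ 2 5 1 4 p₀
  have lapP : lap (fun x => Real.exp (F x)) p₀
      = A6 φ p₀ * (pd2 4 4 (uu φ) p₀ + pd2 5 5 (uu φ) p₀)
        + 2 * (∑ k, pd k (A6 φ) p₀ * pd k (B6 φ) p₀)
        + B6 φ p₀ * (pd2 0 0 (uu φ) p₀ + pd2 1 1 (uu φ) p₀ + pd2 2 2 (uu φ) p₀
            + pd2 3 3 (uu φ) p₀)
        - (2 * a₁6 φ p₀ * (pd2 2 4 (uu φ) p₀ - pd2 1 5 (uu φ) p₀)
            + 2 * ∑ k, pd k (a₁6 φ) p₀ ^ 2)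
        - (2 * a₂6 φ p₀ * (pd2 3 4 (uu φ) p₀ - pd2 0 5 (uu φ) p₀)
            + 2 * ∑ k, pd k (a₂6 φ) p₀ ^ 2)
        - (2 * a₃6 φ p₀ * (pd2 3 5 (uu φ) p₀ + pd2 0 4 (uu φ) p₀)
            + 2 * ∑ k, pd k (a₃6 φ) p₀ ^ 2)
        - (2 * a₄6 φ p₀ * (pd2 2 5 (uu φ) p₀ + pd2 1 4 (uu φ) p₀)
            + 2 * ∑ k, pd k (a₄6 φ) p₀ ^ 2) := by
    rw [e0,
      Finset.sum_congr rfl (fun k _ => pd2_comb (c2A6 hφ) (c2B6 hφ) (c2a₁6 hφ) (c2a₂6 hφ)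
        (c2a₃6 hφ) (c2a₄6 hφ) k p₀),
      Finset.sum_congr rfl (fun k _ => show _ =
          A6 φ p₀ * pd2 k k (B6 φ) p₀ + 2 * (pd k (A6 φ) p₀ * pd k (B6 φ) p₀)
          + B6 φ p₀ * pd2 k k (A6 φ) p₀
          - ((2 * a₁6 φ p₀) * pd2 k k (a₁6 φ) p₀ + 2 * pd k (a₁6 φ) p₀ ^ 2)
          - ((2 * a₂6 φ p₀) * pd2 k k (a₂6 φ) p₀ + 2 * pd k (a₂6 φ) p₀ ^ 2)
          - ((2 * a₃6 φ p₀) * pd2 k k (a₃6 φ) p₀ + 2 * pd k (a₃6 φ) p₀ ^ 2)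
          - ((2 * a₄6 φ p₀) * pd2 k k (a₄6 φ) p₀ + 2 * pd k (a₄6 φ) p₀ ^ 2) from by ring)]
    simp only [Finset.sum_sub_distrib, Finset.sum_add_distrib, ← Finset.mul_sum]
    rw [sum_lap_A6 hφ, sum_lap_B6 hφ, sla1, sla2, sla3, sla4]
  -- u = A + B at p₀
  have huAB : uu φ p₀ = A6 φ p₀ + B6 φ p₀ := by
    show (∑ k, pd2 k k φ p₀) + 2 = _
    rw [Fin.sum_univ_six]
    simp only [A6, B6]
    ring
  -- the value of the quadratic form on the Hessian of φ
  have hQPPinner :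
      B6 φ p₀ * (pd2 0 0 φ p₀ + pd2 1 1 φ p₀ + pd2 2 2 φ p₀ + pd2 3 3 φ p₀)
        + A6 φ p₀ * (pd2 4 4 φ p₀ + pd2 5 5 φ p₀)
        - 2 * a₁6 φ p₀ * (pd2 2 4 φ p₀ - pd2 1 5 φ p₀)
        - 2 * a₂6 φ p₀ * (pd2 3 4 φ p₀ - pd2 0 5 φ p₀)
        - 2 * a₃6 φ p₀ * (pd2 3 5 φ p₀ + pd2 0 4 φ p₀)
        - 2 * a₄6 φ p₀ * (pd2 2 5 φ p₀ + pd2 1 4 φ p₀)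
      = 2 * Real.exp (F p₀) - uu φ p₀ := by
    have e := heq p₀
    rw [huAB]
    simp only [A6, B6, a₁6, a₂6, a₃6, a₄6] at e ⊢
    linear_combination 2 * e
  have hQPP : μ * uu φ p₀ *
      (B6 φ p₀ * (pd2 0 0 φ p₀ + pd2 1 1 φ p₀ + pd2 2 2 φ p₀ + pd2 3 3 φ p₀)
        + A6 φ p₀ * (pd2 4 4 φ p₀ + pd2 5 5 φ p₀)
        - 2 * a₁6 φ p₀ * (pd2 2 4 φ p₀ - pd2 1 5 φ p₀)
        - 2 * a₂6 φ p₀ * (pd2 3 4 φ p₀ - pd2 0 5 φ p₀)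
        - 2 * a₃6 φ p₀ * (pd2 3 5 φ p₀ + pd2 0 4 φ p₀)
        - 2 * a₄6 φ p₀ * (pd2 2 5 φ p₀ + pd2 1 4 φ p₀))
      = μ * uu φ p₀ * (2 * Real.exp (F p₀) - uu φ p₀) := by rw [hQPPinner]
  -- the gradient identity for A + B
  have hAK : ∀ k : Fin 6, pd k (A6 φ) p₀ + pd k (B6 φ) p₀ = μ * uu φ p₀ * pd k φ p₀ := by
    intro k
    have h1 := pd_uu hφ k p₀
    rw [Fin.sum_univ_six] at h1
    rw [pd_A6 hφ k p₀, pd_B6 hφ k p₀]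
    have h2 := hfo k
    linarith [h1, h2]
  have habc : ∀ a b c : ℝ, a + b = c → a * b ≤ c ^ 2 / 4 := by
    intro a b c h
    subst h
    nlinarith [sq_nonneg (a - b)]
  have hSABk : ∀ k : Fin 6, pd k (A6 φ) p₀ * pd k (B6 φ) p₀
      ≤ μ ^ 2 * uu φ p₀ ^ 2 / 4 * pd k φ p₀ ^ 2 := by
    intro k
    calc pd k (A6 φ) p₀ * pd k (B6 φ) p₀ ≤ (μ * uu φ p₀ * pd k φ p₀) ^ 2 / 4 :=
          habc _ _ _ (hAK k)
      _ = μ ^ 2 * uu φ p₀ ^ 2 / 4 * pd k φ p₀ ^ 2 := by ring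
  have hSAB : (∑ k, pd k (A6 φ) p₀ * pd k (B6 φ) p₀)
      ≤ μ ^ 2 * uu φ p₀ ^ 2 / 4 * ∑ k, pd k φ p₀ ^ 2 := by
    rw [Finset.mul_sum]
    exact Finset.sum_le_sum fun k _ => hSABk k
  have hSa1 : (0:ℝ) ≤ ∑ k, pd k (a₁6 φ) p₀ ^ 2 := Finset.sum_nonneg fun k _ => sq_nonneg _
  have hSa2 : (0:ℝ) ≤ ∑ k, pd k (a₂6 φ) p₀ ^ 2 := Finset.sum_nonneg fun k _ => sq_nonneg _
  have hSa3 : (0:ℝ) ≤ ∑ k, pd k (a₃6 φ) p₀ ^ 2 := Finset.sum_nonneg fun k _ => sq_nonneg _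
  have hSa4 : (0:ℝ) ≤ ∑ k, pd k (a₄6 φ) p₀ ^ 2 := Finset.sum_nonneg fun k _ => sq_nonneg _
  have hSnn : (0:ℝ) ≤ ∑ k, pd k φ p₀ ^ 2 := Finset.sum_nonneg fun k _ => sq_nonneg _
  -- A, B are nonnegative at p₀
  have hB0 : 0 ≤ B6 φ p₀ := by
    have := hii ![1,0,0,0,0,0]
    simp [Matrix.cons_val_zero, Matrix.cons_val_one, Matrix.head_cons, Matrix.cons_val_two,
      Matrix.cons_val_three, cons_val_4, cons_val_five, Matrix.vecHead, Matrix.vecTail] at this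
    linarith
  have hA0 : 0 ≤ A6 φ p₀ := by
    have := hii ![0,0,0,0,1,0]
    simp [Matrix.cons_val_zero, Matrix.cons_val_one, Matrix.head_cons, Matrix.cons_val_two,
      Matrix.cons_val_three, cons_val_4, cons_val_five, Matrix.vecHead, Matrix.vecTail] at this
    linarith
  -- bound for the quadratic form on the gradient of φ
  have kgen : ∀ a b c : ℝ, a * (b * c) ≤ |a| * (|b| * |c|) := by
    intro a b c
    calc a * (b * c) ≤ |a * (b * c)| := le_abs_self _
      _ = |a| * (|b| * |c|) := by rw [abs_mul, abs_mul]
  have kgen' : ∀ a b c : ℝ, -(a * (b * c)) ≤ |a| * (|b| * |c|) := by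
    intro a b c
    calc -(a * (b * c)) ≤ |a * (b * c)| := neg_le_abs _
      _ = |a| * (|b| * |c|) := by rw [abs_mul, abs_mul]
  have hQg : B6 φ p₀ * (pd 0 φ p₀ ^ 2 + pd 1 φ p₀ ^ 2 + pd 2 φ p₀ ^ 2 + pd 3 φ p₀ ^ 2)
        + A6 φ p₀ * (pd 4 φ p₀ ^ 2 + pd 5 φ p₀ ^ 2)
        - 2 * a₁6 φ p₀ * (pd 2 φ p₀ * pd 4 φ p₀ - pd 1 φ p₀ * pd 5 φ p₀)
        - 2 * a₂6 φ p₀ * (pd 3 φ p₀ * pd 4 φ p₀ - pd 0 φ p₀ * pd 5 φ p₀)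
        - 2 * a₃6 φ p₀ * (pd 3 φ p₀ * pd 5 φ p₀ + pd 0 φ p₀ * pd 4 φ p₀)
        - 2 * a₄6 φ p₀ * (pd 2 φ p₀ * pd 5 φ p₀ + pd 1 φ p₀ * pd 4 φ p₀)
      ≤ 2 * uu φ p₀ * ∑ k, pd k φ p₀ ^ 2 := by
    have hw := hii (fun i => |pd i φ p₀|)
    simp only [sq_abs] at hw
    have hSexp : (∑ k : Fin 6, pd k φ p₀ ^ 2)
        = pd 0 φ p₀ ^ 2 + pd 1 φ p₀ ^ 2 + pd 2 φ p₀ ^ 2 + pd 3 φ p₀ ^ 2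
          + pd 4 φ p₀ ^ 2 + pd 5 φ p₀ ^ 2 := Fin.sum_univ_six _
    rw [hSexp, huAB]
    have m1 : 0 ≤ A6 φ p₀ * (pd 0 φ p₀ ^ 2 + pd 1 φ p₀ ^ 2 + pd 2 φ p₀ ^ 2 + pd 3 φ p₀ ^ 2) :=
      mul_nonneg hA0 (by positivity)
    have m2 : 0 ≤ B6 φ p₀ * (pd 4 φ p₀ ^ 2 + pd 5 φ p₀ ^ 2) := mul_nonneg hB0 (by positivity)
    have k1 := kgen' (a₁6 φ p₀) (pd 2 φ p₀) (pd 4 φ p₀)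
    have k2 := kgen (a₁6 φ p₀) (pd 1 φ p₀) (pd 5 φ p₀)
    have k3 := kgen' (a₂6 φ p₀) (pd 3 φ p₀) (pd 4 φ p₀)
    have k4 := kgen (a₂6 φ p₀) (pd 0 φ p₀) (pd 5 φ p₀)
    have k5 := kgen' (a₃6 φ p₀) (pd 3 φ p₀) (pd 5 φ p₀)
    have k6 := kgen' (a₃6 φ p₀) (pd 0 φ p₀) (pd 4 φ p₀)
    have k7 := kgen' (a₄6 φ p₀) (pd 2 φ p₀) (pd 5 φ p₀)
    have k8 := kgen' (a₄6 φ p₀) (pd 1 φ p₀) (pd 4 φ p₀)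
    linarith [hw, m1, m2, k1, k2, k3, k4, k5, k6, k7, k8]
  have hμu2 : 0 ≤ μ ^ 2 * uu φ p₀ := mul_nonneg (sq_nonneg μ) hu_pos.le
  have hQgmul := mul_le_mul_of_nonneg_left hQg hμu2
  have hslack : 0 ≤ μ ^ 2 * uu φ p₀ ^ 2 * ∑ k, pd k φ p₀ ^ 2 := by positivity
  -- final assembly
  show μ * uu φ p₀ ^ 2
      ≤ -(lap (fun x => Real.exp (F x)) p₀) + 2 * μ * uu φ p₀ * Real.exp (F p₀)
        + 3 * μ ^ 2 * uu φ p₀ ^ 2 * (∑ i, pd i φ p₀ ^ 2)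
  linarith [keyT, lapP, hQPP, hQgmul, hSAB, hSa1, hSa2, hSa3, hSa4, hslack]
end
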